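/- arXiv:1312.6508 — 4 statements merged into one kernel-verified Lean document; each statement's English description precedes it below -/
import Mathlib

section
/- Let Ω ⊂ ℝ^n be a bounded domain, p ≥ 1, and ν a probability measure on Ω. Suppose μ = u·ℒ^n minimizes 𝔉^p_ν over probability measures on Ω and 𝔉^p_ν(μ) < +∞. Then for every probability measure μ₁ = u₁·ℒ^n on Ω with 𝔉^p_ν(μ₁) < +∞, the inequality T_p(μ₁,ν) − T_p(μ,ν) + ∫_Ω f'(u(x))(u₁(x) − u(x)) dx ≥ 0 holds. -/
open MeasureTheory Set Filter Topology Metric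
open scoped ENNReal NNReal

noncomputable section

/-- Euclidean space ℝⁿ. -/
abbrev Rn (n : ℕ) := EuclideanSpace ℝ (Fin n)

/-- `μ` is a probability measure "on `Ω`", i.e. giving no mass to the complement of `Ω`. -/
def ProbOn {n : ℕ} (Ω : Set (Rn n)) (μ : Measure (Rn n)) : Prop :=
  IsProbabilityMeasure μ ∧ μ Ωᶜ = 0

/-- Transport plans (couplings) between two measures:  probability measures on the
product space whose marginals are `μ` and `ν`. -/
def Couplings {n : ℕ} (μ ν : Measure (Rn n)) : Set (Measure (Rn n × Rn n)) :=
  {γ | IsProbabilityMeasure γ ∧ γ.map Prod.fst = μ ∧ γ.map Prod.snd = ν}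

/-- The Monge–Kantorovich transport cost `T_p(μ,ν) = inf_γ ∫ |x−y|^p dγ`. -/
def Tcost {n : ℕ} (p : ℝ) (μ ν : Measure (Rn n)) : ℝ≥0∞ :=
  ⨅ γ ∈ Couplings μ ν, ∫⁻ z, ENNReal.ofReal (‖z.1 - z.2‖ ^ p) ∂γ

/-- The measure `u·ℒⁿ` on `Ω` (absolutely continuous with density `u`). -/
def densOn {n : ℕ} (Ω : Set (Rn n)) (u : Rn n → ℝ) : Measure (Rn n) :=
  (volume.restrict Ω).withDensity fun x => ENNReal.ofReal (u x)

/-- `F(μ) = ∫_Ω f(u)` if `μ = u·ℒⁿ` is absolutely continuous, `+∞` otherwise. -/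
def Ffun {n : ℕ} (f : ℝ → ℝ) (Ω : Set (Rn n)) (μ : Measure (Rn n)) : ℝ≥0∞ :=
  open scoped Classical in
  if μ ≪ (volume : Measure (Rn n)) then
    ∫⁻ x in Ω, ENNReal.ofReal (f ((μ.rnDeriv volume x).toReal)) else ⊤

/-- `G(ν) = ∑ᵢ g(aᵢ)` if `ν = ∑ᵢ aᵢ δ_{xᵢ}` is purely atomic (atoms at distinct points),
`+∞` (the infimum over the empty set) otherwise. -/
def Gfun {n : ℕ} (g : ℝ → ℝ) (ν : Measure (Rn n)) : ℝ≥0∞ :=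
  ⨅ r : {q : (ℕ → ℝ) × (ℕ → Rn n) //
      (∀ i, 0 ≤ q.1 i) ∧
      (∀ i j, q.1 i ≠ 0 → q.1 j ≠ 0 → q.2 i = q.2 j → i = j) ∧
      ν = Measure.sum fun i => ENNReal.ofReal (q.1 i) • Measure.dirac (q.2 i)},
    ∑' i, ENNReal.ofReal (g (r.1.1 i))

/-- The total cost functional `𝔉^p(μ,ν) = T_p(μ,ν) + F(μ) + G(ν)`. -/
def FFp {n : ℕ} (p : ℝ) (f g : ℝ → ℝ) (Ω : Set (Rn n)) (μ ν : Measure (Rn n)) : ℝ≥0∞ :=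
  Tcost p μ ν + Ffun f Ω μ + Gfun g ν

/-- The functional `𝔉^p_ν(μ) = T_p(μ,ν) + F(μ)` with `ν` fixed. -/
def FFnu {n : ℕ} (p : ℝ) (f : ℝ → ℝ) (Ω : Set (Rn n)) (ν μ : Measure (Rn n)) : ℝ≥0∞ :=
  Tcost p μ ν + Ffun f Ω μ

/-- A bounded domain: the closure of a nonempty connected bounded open set,
with Lebesgue-negligible boundary. -/
def IsBoundedDomain {n : ℕ} (Ω : Set (Rn n)) : Prop :=
  ∃ U : Set (Rn n), IsOpen U ∧ U.Nonempty ∧ IsConnected U ∧ Bornology.IsBounded U ∧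
    Ω = closure U ∧ volume (frontier Ω) = 0

/-- The `c`-transform `χ^c(y) = inf_{x∈Ω} (|x−y|^p − χ(x))` for the cost `c(x,y)=|x−y|^p`. -/
def ctransform {n : ℕ} (Ω : Set (Rn n)) (p : ℝ) (χ : Rn n → ℝ) (y : Rn n) : ℝ :=
  ⨅ x : Ω, (‖(x : Rn n) - y‖ ^ p - χ x)

/-- `ψ` is `c`-concave on `Ω` (for the cost `|x−y|^p`) if it is a `c`-transform. -/
def CConcave {n : ℕ} (Ω : Set (Rn n)) (p : ℝ) (ψ : Rn n → ℝ) : Prop :=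
  ∃ χ : Rn n → ℝ, ∀ y ∈ Ω, ψ y = ctransform Ω p χ y

/-- `ψ` is a Kantorovich potential for the transport from `μ` to `ν` with cost `|x−y|^p`. -/
def IsKantorovichPotential {n : ℕ} (Ω : Set (Rn n)) (p : ℝ)
    (μ ν : Measure (Rn n)) (ψ : Rn n → ℝ) : Prop :=
  (∀ x ∈ Ω, ∀ y ∈ Ω, ψ x + ctransform Ω p ψ y ≤ ‖x - y‖ ^ p) ∧
  (∫ x in Ω, ψ x ∂μ) + (∫ y in Ω, ctransform Ω p ψ y ∂ν) = (Tcost p μ ν).toReal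

/-- `μ` has finite `p`-th moment (i.e. `μ ∈ 𝒲_p`). -/
def FiniteMoment {n : ℕ} (p : ℝ) (μ : Measure (Rn n)) : Prop :=
  ∫⁻ x, ENNReal.ofReal (‖x‖ ^ p) ∂μ < ⊤

/-- Weak-* convergence of a sequence of measures. -/
def WeakStar {n : ℕ} (μs : ℕ → Measure (Rn n)) (μ : Measure (Rn n)) : Prop :=
  ∀ φ : Rn n → ℝ, Continuous φ →
    Tendsto (fun h => ∫ x, φ x ∂(μs h)) atTop (𝓝 (∫ x, φ x ∂μ))

end


section AuxLemmas
open MeasureTheory Set Filter Topology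
open scoped ENNReal

private lemma aux_meas {α : Type*} [MeasurableSpace α] {g : ℝ → ℝ}
    (hg : ContinuousOn g (Ici 0)) {u : α → ℝ} (hu : Measurable u) (hu0 : ∀ x, 0 ≤ u x) :
    Measurable fun x => g (u x) := by
  have hgc : Continuous fun t : ℝ => g (max t 0) :=
    hg.comp_continuous (continuous_id.max continuous_const) fun t => mem_Ici.2 (le_max_right _ _)
  have h : (fun x => g (u x)) = fun x => g (max (u x) 0) := by
    funext x; rw [max_eq_left (hu0 x)]
  rw [h]; exact hgc.measurable.comp hu

private lemma aux_tangent {f f' : ℝ → ℝ} (hc : ConvexOn ℝ (Ici 0) f)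
    (hd : ∀ t ∈ Ici (0:ℝ), HasDerivWithinAt f (f' t) (Ici 0) t)
    {a b : ℝ} (ha : 0 ≤ a) (hb : 0 ≤ b) : f a + f' a * (b - a) ≤ f b := by
  rcases lt_trichotomy a b with h | rfl | h
  · have h1 := hc.le_slope_of_hasDerivWithinAt ha hb h (hd a ha)
    rw [slope_def_field] at h1
    have h2 : (0:ℝ) < b - a := by linarith
    have h3 := (le_div_iff₀ h2).mp h1
    linarith
  · simp
  · have h1 := hc.slope_le_of_hasDerivWithinAt hb ha h (hd a ha)
    rw [slope_def_field] at h1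
    have h2 : (0:ℝ) < a - b := by linarith
    have h3 := (div_le_iff₀ h2).mp h1
    have h4 : f' a * (b - a) = -(f' a * (a - b)) := by ring
    linarith

private lemma aux_quot_lower {f f' : ℝ → ℝ} (hc : ConvexOn ℝ (Ici 0) f)
    (hd : ∀ t ∈ Ici (0:ℝ), HasDerivWithinAt f (f' t) (Ici 0) t)
    {a b ε : ℝ} (ha : 0 ≤ a) (hb : 0 ≤ b) (hε : 0 < ε) (hε1 : ε ≤ 1) :
    f' a * (b - a) ≤ (f ((1 - ε) * a + ε * b) - f a) / ε := by
  have hb' : (0:ℝ) ≤ (1 - ε) * a + ε * b :=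
    add_nonneg (mul_nonneg (by linarith) ha) (mul_nonneg hε.le hb)
  have h1 := aux_tangent hc hd ha hb'
  rw [le_div_iff₀ hε]
  have h2 : f' a * ((1 - ε) * a + ε * b - a) = f' a * (b - a) * ε := by ring
  linarith [h1, h2]

private lemma aux_quot_mono {f : ℝ → ℝ} (hc : ConvexOn ℝ (Ici 0) f)
    {a b ε ε' : ℝ} (ha : 0 ≤ a) (hb : 0 ≤ b) (hε : 0 < ε) (hee : ε ≤ ε') (he1 : ε' ≤ 1) :
    (f ((1 - ε) * a + ε * b) - f a) / ε ≤ (f ((1 - ε') * a + ε' * b) - f a) / ε' := by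
  have hε' : 0 < ε' := lt_of_lt_of_le hε hee
  set t := ε / ε' with htdef
  have htε : t * ε' = ε := div_mul_cancel₀ ε hε'.ne'
  have ht0 : 0 ≤ t := by positivity
  have ht1 : t ≤ 1 := by rw [htdef, div_le_one hε']; exact hee
  have hb' : (1 - ε') * a + ε' * b ∈ Ici (0:ℝ) :=
    mem_Ici.2 (add_nonneg (mul_nonneg (by linarith) ha) (mul_nonneg hε'.le hb))
  have key := hc.2 (mem_Ici.2 ha) hb' (by linarith : (0:ℝ) ≤ 1 - t) ht0 (by ring)
  simp only [smul_eq_mul] at key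
  have harg : (1 - t) * a + t * ((1 - ε') * a + ε' * b) = (1 - ε) * a + ε * b := by
    linear_combination (b - a) * htε
  rw [harg] at key
  rw [div_le_div_iff₀ hε hε']
  have k2 := mul_le_mul_of_nonneg_right key hε'.le
  have e1 : ((1 - t) * f a + t * f ((1 - ε') * a + ε' * b)) * ε'
      = (ε' - ε) * f a + ε * f ((1 - ε') * a + ε' * b) := by
    linear_combination (f ((1 - ε') * a + ε' * b) - f a) * htε
  rw [e1] at k2
  linarith

private lemma aux_Ffun {n : ℕ} {Ω : Set (Rn n)} (hΩm : MeasurableSet Ω) (f : ℝ → ℝ)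
    {v : Rn n → ℝ} (hv : Measurable v) (hv0 : ∀ x, 0 ≤ v x) :
    Ffun f Ω (densOn Ω v) = ∫⁻ x in Ω, ENNReal.ofReal (f (v x)) := by
  have hrepr : densOn Ω v = volume.withDensity (Ω.indicator fun x => ENNReal.ofReal (v x)) := by
    rw [densOn, withDensity_indicator hΩm]
  have hac : densOn Ω v ≪ (volume : Measure (Rn n)) := by
    rw [hrepr]; exact withDensity_absolutelyContinuous _ _
  have hmeas : Measurable (Ω.indicator fun x => ENNReal.ofReal (v x)) :=
    (hv.ennreal_ofReal).indicator hΩm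
  have hrn : (densOn Ω v).rnDeriv volume =ᵐ[volume] Ω.indicator fun x => ENNReal.ofReal (v x) := by
    rw [hrepr]; exact Measure.rnDeriv_withDensity volume hmeas
  unfold Ffun
  rw [if_pos hac]
  refine lintegral_congr_ae ?_
  have h1 : ∀ᵐ x ∂(volume.restrict Ω),
      (densOn Ω v).rnDeriv volume x = Ω.indicator (fun x => ENNReal.ofReal (v x)) x :=
    ae_restrict_of_ae hrn
  filter_upwards [h1, ae_restrict_mem hΩm] with x hx hxΩ
  rw [hx, indicator_of_mem hxΩ, ENNReal.toReal_ofReal (hv0 x)]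

private lemma aux_dens_comb {n : ℕ} (Ω : Set (Rn n)) {u u₁ : Rn n → ℝ}
    (hu : Measurable u) (hu₁ : Measurable u₁)
    (hu0 : ∀ x, 0 ≤ u x) (hu₁0 : ∀ x, 0 ≤ u₁ x) {ε : ℝ} (hε0 : 0 ≤ ε) (hε1 : ε ≤ 1) :
    densOn Ω (fun x => (1 - ε) * u x + ε * u₁ x)
      = ENNReal.ofReal (1 - ε) • densOn Ω u + ENNReal.ofReal ε • densOn Ω u₁ := by
  unfold densOn
  have h1 : (fun x => ENNReal.ofReal ((1 - ε) * u x + ε * u₁ x))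
      = (ENNReal.ofReal (1 - ε) • fun x => ENNReal.ofReal (u x))
        + ENNReal.ofReal ε • fun x => ENNReal.ofReal (u₁ x) := by
    funext x
    simp only [Pi.add_apply, Pi.smul_apply, smul_eq_mul]
    rw [← ENNReal.ofReal_mul (by linarith), ← ENNReal.ofReal_mul hε0,
      ← ENNReal.ofReal_add (mul_nonneg (by linarith) (hu0 x)) (mul_nonneg hε0 (hu₁0 x))]
  rw [h1, withDensity_add_left (hu.ennreal_ofReal.const_smul _),
    withDensity_smul _ hu.ennreal_ofReal, withDensity_smul _ hu₁.ennreal_ofReal]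

end AuxLemmas

/-- the variational inequality satisfied by a minimizer of `𝔉^p_ν`. -/
theorem statement_1 {n : ℕ} (Ω : Set (Rn n)) (hΩ : IsBoundedDomain Ω)
    (p : ℝ) (hp : 1 ≤ p) (f f' : ℝ → ℝ)
    (hf_nonneg : ∀ t : ℝ, 0 ≤ t → 0 ≤ f t) (hf0 : f 0 = 0)
    (hf_sconv : StrictConvexOn ℝ (Ici 0) f)
    (hf_deriv : ∀ t ∈ Ici (0:ℝ), HasDerivWithinAt f (f' t) (Ici 0) t)
    (hf'_cont : ContinuousOn f' (Ici 0)) (hf'0 : f' 0 = 0)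
    (hf_super : Tendsto (fun t => f t / t) atTop atTop)
    (ν : Measure (Rn n)) (hν : ProbOn Ω ν)
    (u : Rn n → ℝ) (hu_meas : Measurable u) (hu_nonneg : ∀ x, 0 ≤ u x)
    (μ : Measure (Rn n)) (hμ : μ = densOn Ω u) (hμP : ProbOn Ω μ)
    (hmin : ∀ μ' : Measure (Rn n), ProbOn Ω μ' → FFnu p f Ω ν μ ≤ FFnu p f Ω ν μ')
    (hfin : FFnu p f Ω ν μ < ⊤)
    (u₁ : Rn n → ℝ) (hu₁_meas : Measurable u₁) (hu₁_nonneg : ∀ x, 0 ≤ u₁ x)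
    (μ₁ : Measure (Rn n)) (hμ₁ : μ₁ = densOn Ω u₁) (hμ₁P : ProbOn Ω μ₁)
    (hfin₁ : FFnu p f Ω ν μ₁ < ⊤) :
    0 ≤ (Tcost p μ₁ ν).toReal - (Tcost p μ ν).toReal
        + ∫ x in Ω, f' (u x) * (u₁ x - u x) := by
  classical
  obtain ⟨U, -, -, -, -, hΩ_eq, -⟩ := hΩ
  have hΩm : MeasurableSet Ω := by rw [hΩ_eq]; exact isClosed_closure.measurableSet
  have hFc : ConvexOn ℝ (Ici 0) f := hf_sconv.convexOn
  have hfc : ContinuousOn f (Ici 0) := fun t ht => (hf_deriv t ht).continuousWithinAt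
  have hmfu : Measurable fun x => f (u x) := aux_meas hfc hu_meas hu_nonneg
  have hmfu₁ : Measurable fun x => f (u₁ x) := aux_meas hfc hu₁_meas hu₁_nonneg
  have hmf' : Measurable fun x => f' (u x) := aux_meas hf'_cont hu_meas hu_nonneg
  unfold FFnu at hfin hfin₁ hmin
  have hA : Tcost p μ ν < ⊤ := le_self_add.trans_lt hfin
  have hA₁ : Tcost p μ₁ ν < ⊤ := le_self_add.trans_lt hfin₁
  have hBμ : Ffun f Ω μ < ⊤ := le_add_self.trans_lt hfin
  have hBμ₁ : Ffun f Ω μ₁ < ⊤ := le_add_self.trans_lt hfin₁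
  have hBeq : Ffun f Ω μ = ∫⁻ x in Ω, ENNReal.ofReal (f (u x)) := by
    rw [hμ]; exact aux_Ffun hΩm f hu_meas hu_nonneg
  have hBeq₁ : Ffun f Ω μ₁ = ∫⁻ x in Ω, ENNReal.ofReal (f (u₁ x)) := by
    rw [hμ₁]; exact aux_Ffun hΩm f hu₁_meas hu₁_nonneg
  have hBlt : (∫⁻ x in Ω, ENNReal.ofReal (f (u x))) < ⊤ := hBeq ▸ hBμ
  have hBlt₁ : (∫⁻ x in Ω, ENNReal.ofReal (f (u₁ x))) < ⊤ := hBeq₁ ▸ hBμ₁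
  have hIu : Integrable (fun x => f (u x)) (volume.restrict Ω) :=
    ⟨hmfu.aestronglyMeasurable,
      (hasFiniteIntegral_iff_ofReal (ae_of_all _ fun x => hf_nonneg _ (hu_nonneg x))).2 hBlt⟩
  -- the sequence of interpolation parameters
  set ε : ℕ → ℝ := fun k => 1 / (k + 1) with hεdef
  have hεpos : ∀ k, 0 < ε k := fun k => by simp only [hεdef]; positivity
  have hεle : ∀ k, ε k ≤ 1 := fun k => by
    simp only [hεdef]
    rw [div_le_one (by positivity)]
    linarith [(Nat.cast_nonneg k : (0:ℝ) ≤ (k:ℝ))]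
  set w : ℕ → Rn n → ℝ := fun k x => (1 - ε k) * u x + ε k * u₁ x with hwdef
  have hw0 : ∀ k x, 0 ≤ w k x := fun k x =>
    add_nonneg (mul_nonneg (by linarith [hεle k]) (hu_nonneg x))
      (mul_nonneg (hεpos k).le (hu₁_nonneg x))
  have hwmeas : ∀ k, Measurable (w k) := fun k =>
    (hu_meas.const_mul _).add (hu₁_meas.const_mul _)
  have hmfw : ∀ k, Measurable fun x => f (w k x) := fun k => aux_meas hfc (hwmeas k) (hw0 k)
  have hrepr : ∀ k, densOn Ω (w k)
      = ENNReal.ofReal (1 - ε k) • μ + ENNReal.ofReal (ε k) • μ₁ := by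
    intro k
    rw [hμ, hμ₁]
    exact aux_dens_comb Ω hu_meas hu₁_meas hu_nonneg hu₁_nonneg (hεpos k).le (hεle k)
  have hsum1 : ∀ k, ENNReal.ofReal (1 - ε k) + ENNReal.ofReal (ε k) = 1 := by
    intro k
    rw [← ENNReal.ofReal_add (by linarith [hεle k]) (hεpos k).le, sub_add_cancel,
      ENNReal.ofReal_one]
  have hProb : ∀ k, ProbOn Ω (densOn Ω (w k)) := by
    intro k
    refine ⟨⟨?_⟩, ?_⟩
    · rw [hrepr k, Measure.add_apply, Measure.smul_apply, Measure.smul_apply,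
        hμP.1.measure_univ, hμ₁P.1.measure_univ, smul_eq_mul, smul_eq_mul,
        mul_one, mul_one]
      exact hsum1 k
    · rw [hrepr k, Measure.add_apply, Measure.smul_apply, Measure.smul_apply,
        hμP.2, hμ₁P.2]
      simp
  -- convexity of the transport cost
  have hTconv : ∀ k, Tcost p (densOn Ω (w k)) ν
      ≤ ENNReal.ofReal (1 - ε k) * Tcost p μ ν + ENNReal.ofReal (ε k) * Tcost p μ₁ ν := by
    intro k
    refine ENNReal.le_of_forall_pos_le_add fun δ hδ _ => ?_
    have hδ0 : (δ : ℝ≥0∞) ≠ 0 := by exact_mod_cast hδ.ne'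
    have h1 : (⨅ γ ∈ Couplings μ ν, ∫⁻ z, ENNReal.ofReal (‖z.1 - z.2‖ ^ p) ∂γ)
        < Tcost p μ ν + δ := ENNReal.lt_add_right hA.ne hδ0
    obtain ⟨γ, h2⟩ := iInf_lt_iff.mp h1
    obtain ⟨hγC, hγlt⟩ := iInf_lt_iff.mp h2
    have h1' : (⨅ γ ∈ Couplings μ₁ ν, ∫⁻ z, ENNReal.ofReal (‖z.1 - z.2‖ ^ p) ∂γ)
        < Tcost p μ₁ ν + δ := ENNReal.lt_add_right hA₁.ne hδ0
    obtain ⟨γ₁, h2'⟩ := iInf_lt_iff.mp h1'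
    obtain ⟨hγ₁C, hγ₁lt⟩ := iInf_lt_iff.mp h2'
    have hmem : ENNReal.ofReal (1 - ε k) • γ + ENNReal.ofReal (ε k) • γ₁
        ∈ Couplings (densOn Ω (w k)) ν := by
      refine ⟨⟨?_⟩, ?_, ?_⟩
      · rw [Measure.add_apply, Measure.smul_apply, Measure.smul_apply,
          hγC.1.measure_univ, hγ₁C.1.measure_univ, smul_eq_mul, smul_eq_mul,
          mul_one, mul_one]
        exact hsum1 k
      · rw [Measure.map_add _ _ measurable_fst, Measure.map_smul, Measure.map_smul,
          hγC.2.1, hγ₁C.2.1, hrepr k]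
      · rw [Measure.map_add _ _ measurable_snd, Measure.map_smul, Measure.map_smul,
          hγC.2.2, hγ₁C.2.2, ← add_smul, hsum1 k, one_smul]
    have hle : Tcost p (densOn Ω (w k)) ν
        ≤ ∫⁻ z, ENNReal.ofReal (‖z.1 - z.2‖ ^ p)
            ∂(ENNReal.ofReal (1 - ε k) • γ + ENNReal.ofReal (ε k) • γ₁) :=
      iInf₂_le _ hmem
    rw [lintegral_add_measure, lintegral_smul_measure, lintegral_smul_measure] at hle
    refine hle.trans ?_
    calc ENNReal.ofReal (1 - ε k) * (∫⁻ z, ENNReal.ofReal (‖z.1 - z.2‖ ^ p) ∂γ)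
          + ENNReal.ofReal (ε k) * (∫⁻ z, ENNReal.ofReal (‖z.1 - z.2‖ ^ p) ∂γ₁)
        ≤ ENNReal.ofReal (1 - ε k) * (Tcost p μ ν + δ)
            + ENNReal.ofReal (ε k) * (Tcost p μ₁ ν + δ) :=
          add_le_add (mul_le_mul_right hγlt.le _) (mul_le_mul_right hγ₁lt.le _)
      _ = (ENNReal.ofReal (1 - ε k) * Tcost p μ ν + ENNReal.ofReal (ε k) * Tcost p μ₁ ν)
            + (ENNReal.ofReal (1 - ε k) + ENNReal.ofReal (ε k)) * δ := by ring
      _ = (ENNReal.ofReal (1 - ε k) * Tcost p μ ν + ENNReal.ofReal (ε k) * Tcost p μ₁ ν)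
            + δ := by rw [hsum1 k, one_mul]
  -- the entropy term of the interpolant
  have hFeq : ∀ k, Ffun f Ω (densOn Ω (w k)) = ∫⁻ x in Ω, ENNReal.ofReal (f (w k x)) :=
    fun k => aux_Ffun hΩm f (hwmeas k) (hw0 k)
  have hFle : ∀ k, (∫⁻ x in Ω, ENNReal.ofReal (f (w k x)))
      ≤ ENNReal.ofReal (1 - ε k) * (∫⁻ x in Ω, ENNReal.ofReal (f (u x)))
        + ENNReal.ofReal (ε k) * (∫⁻ x in Ω, ENNReal.ofReal (f (u₁ x))) := by
    intro k
    have hptw : ∀ x, ENNReal.ofReal (f (w k x))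
        ≤ ENNReal.ofReal (1 - ε k) * ENNReal.ofReal (f (u x))
          + ENNReal.ofReal (ε k) * ENNReal.ofReal (f (u₁ x)) := by
      intro x
      rw [← ENNReal.ofReal_mul (by linarith [hεle k]), ← ENNReal.ofReal_mul (hεpos k).le,
        ← ENNReal.ofReal_add (mul_nonneg (by linarith [hεle k]) (hf_nonneg _ (hu_nonneg x)))
          (mul_nonneg (hεpos k).le (hf_nonneg _ (hu₁_nonneg x)))]
      refine ENNReal.ofReal_le_ofReal ?_
      have := hFc.2 (mem_Ici.2 (hu_nonneg x)) (mem_Ici.2 (hu₁_nonneg x))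
        (by linarith [hεle k] : (0:ℝ) ≤ 1 - ε k) (hεpos k).le (by ring)
      simpa [smul_eq_mul] using this
    calc (∫⁻ x in Ω, ENNReal.ofReal (f (w k x)))
        ≤ ∫⁻ x in Ω, (ENNReal.ofReal (1 - ε k) * ENNReal.ofReal (f (u x))
            + ENNReal.ofReal (ε k) * ENNReal.ofReal (f (u₁ x))) := lintegral_mono hptw
      _ = _ := by
          rw [lintegral_add_left (hmfu.ennreal_ofReal.const_mul _),
            lintegral_const_mul _ hmfu.ennreal_ofReal,
            lintegral_const_mul _ hmfu₁.ennreal_ofReal]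
  have hFlt : ∀ k, (∫⁻ x in Ω, ENNReal.ofReal (f (w k x))) < ⊤ := fun k =>
    (hFle k).trans_lt (ENNReal.add_lt_top.2
      ⟨ENNReal.mul_lt_top ENNReal.ofReal_lt_top hBlt,
        ENNReal.mul_lt_top ENNReal.ofReal_lt_top hBlt₁⟩)
  have hIw : ∀ k, Integrable (fun x => f (w k x)) (volume.restrict Ω) := fun k =>
    ⟨(hmfw k).aestronglyMeasurable,
      (hasFiniteIntegral_iff_ofReal (ae_of_all _ fun x => hf_nonneg _ (hw0 k x))).2 (hFlt k)⟩
  have hbeq : ∫ x in Ω, f (u x) = (∫⁻ x in Ω, ENNReal.ofReal (f (u x))).toReal :=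
    integral_eq_lintegral_of_nonneg_ae (ae_of_all _ fun x => hf_nonneg _ (hu_nonneg x))
      hmfu.aestronglyMeasurable
  have hbeqw : ∀ k, ∫ x in Ω, f (w k x)
      = (∫⁻ x in Ω, ENNReal.ofReal (f (w k x))).toReal := fun k =>
    integral_eq_lintegral_of_nonneg_ae (ae_of_all _ fun x => hf_nonneg _ (hw0 k x))
      (hmfw k).aestronglyMeasurable
  -- the key inequality from minimality
  have hkey0 : ∀ k, (Tcost p μ ν).toReal + ∫ x in Ω, f (u x)
      ≤ ((1 - ε k) * (Tcost p μ ν).toReal + ε k * (Tcost p μ₁ ν).toReal)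
        + ∫ x in Ω, f (w k x) := by
    intro k
    have hmain : Tcost p μ ν + Ffun f Ω μ
        ≤ (ENNReal.ofReal (1 - ε k) * Tcost p μ ν + ENNReal.ofReal (ε k) * Tcost p μ₁ ν)
          + ∫⁻ x in Ω, ENNReal.ofReal (f (w k x)) :=
      (hmin _ (hProb k)).trans (add_le_add (hTconv k) (le_of_eq (hFeq k)))
    have hne1 : ENNReal.ofReal (1 - ε k) * Tcost p μ ν ≠ ⊤ :=
      ENNReal.mul_ne_top ENNReal.ofReal_ne_top hA.ne
    have hne2 : ENNReal.ofReal (ε k) * Tcost p μ₁ ν ≠ ⊤ :=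
      ENNReal.mul_ne_top ENNReal.ofReal_ne_top hA₁.ne
    have hfinR : (ENNReal.ofReal (1 - ε k) * Tcost p μ ν
        + ENNReal.ofReal (ε k) * Tcost p μ₁ ν)
        + (∫⁻ x in Ω, ENNReal.ofReal (f (w k x))) ≠ ⊤ :=
      ENNReal.add_ne_top.2 ⟨ENNReal.add_ne_top.2 ⟨hne1, hne2⟩, (hFlt k).ne⟩
    have h2 := ENNReal.toReal_mono hfinR hmain
    rw [ENNReal.toReal_add hA.ne hBμ.ne, hBeq, ← hbeq,
      ENNReal.toReal_add (ENNReal.add_ne_top.2 ⟨hne1, hne2⟩) (hFlt k).ne,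
      ENNReal.toReal_add hne1 hne2, ENNReal.toReal_mul, ENNReal.toReal_mul,
      ENNReal.toReal_ofReal (by linarith [hεle k]), ENNReal.toReal_ofReal (hεpos k).le,
      ← hbeqw k] at h2
    exact h2
  -- the difference quotients
  set q : ℕ → Rn n → ℝ := fun k x => (f (w k x) - f (u x)) / ε k with hqdef
  have hqmeas : ∀ k, Measurable (q k) := fun k => ((hmfw k).sub hmfu).div_const _
  have hqI : ∀ k, Integrable (q k) (volume.restrict Ω) := fun k =>
    ((hIw k).sub hIu).div_const _
  have hqint : ∀ k, ∫ x in Ω, q k x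
      = ((∫ x in Ω, f (w k x)) - ∫ x in Ω, f (u x)) / ε k := by
    intro k
    simp only [hqdef]
    rw [integral_div, integral_sub (hIw k) hIu]
  have hkey : ∀ k, (Tcost p μ ν).toReal - (Tcost p μ₁ ν).toReal ≤ ∫ x in Ω, q k x := by
    intro k
    rw [hqint k, le_div_iff₀ (hεpos k)]
    linarith [hkey0 k]
  set L : Rn n → ℝ := fun x => f' (u x) * (u₁ x - u x) with hLdef
  have hql : ∀ k x, L x ≤ q k x := by
    intro k x
    have := aux_quot_lower hFc hf_deriv (hu_nonneg x) (hu₁_nonneg x) (hεpos k) (hεle k)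
    simpa [hLdef, hqdef, hwdef] using this
  have hqanti : ∀ x, Antitone fun k => q k x := by
    intro x
    refine antitone_nat_of_succ_le fun k => ?_
    have hmono : ε (k + 1) ≤ ε k := by
      simp only [hεdef]
      apply one_div_le_one_div_of_le (by positivity)
      push_cast; linarith
    have h := aux_quot_mono hFc (hu_nonneg x) (hu₁_nonneg x) (hεpos (k + 1)) hmono (hεle k)
    simpa [hqdef, hwdef] using h
  have hqtend : ∀ x, Tendsto (fun k => q k x) atTop (𝓝 (L x)) := by
    intro x
    rcases eq_or_ne (u₁ x) (u x) with hbe | hbe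
    · have hq0 : ∀ k, q k x = 0 := by
        intro k
        simp only [hqdef, hwdef, hbe]
        rw [show (1 - ε k) * u x + ε k * u x = u x by ring]
        simp
      have hL0 : L x = 0 := by simp [hLdef, hbe]
      have hfun : (fun k => q k x) = fun _ => (0:ℝ) := funext hq0
      rw [hfun, hL0]
      exact tendsto_const_nhds
    · have hd0 : u₁ x - u x ≠ 0 := sub_ne_zero.2 hbe
      have hslope : Tendsto (slope f (u x)) (𝓝[Ici 0 \ {u x}] (u x)) (𝓝 (f' (u x))) :=
        hasDerivWithinAt_iff_tendsto_slope.mp (hf_deriv (u x) (hu_nonneg x))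
      have hy : Tendsto (fun k => (1 - ε k) * u x + ε k * u₁ x) atTop
          (𝓝[Ici 0 \ {u x}] (u x)) := by
        rw [tendsto_nhdsWithin_iff]
        constructor
        · have h0 : Tendsto ε atTop (𝓝 0) := by
            simp only [hεdef]; exact tendsto_one_div_add_atTop_nhds_zero_nat
          have h1 : Tendsto (fun k => u x + ε k * (u₁ x - u x)) atTop
              (𝓝 (u x + 0 * (u₁ x - u x))) :=
            Tendsto.const_add _ (h0.mul_const (u₁ x - u x))
          have heq : ∀ k, (1 - ε k) * u x + ε k * u₁ x = u x + ε k * (u₁ x - u x) :=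
            fun k => by ring
          refine Tendsto.congr (fun k => (heq k).symm) ?_
          simpa using h1
        · refine Eventually.of_forall fun k => ⟨?_, ?_⟩
          · exact mem_Ici.2 (add_nonneg (mul_nonneg (by linarith [hεle k]) (hu_nonneg x))
              (mul_nonneg (hεpos k).le (hu₁_nonneg x)))
          · simp only [mem_singleton_iff]
            intro hE
            apply hd0
            have h3 : ε k * (u₁ x - u x) = 0 := by linarith [hE, (by ring :
              (1 - ε k) * u x + ε k * u₁ x = u x + ε k * (u₁ x - u x))]
            exact (mul_eq_zero.mp h3).resolve_left (hεpos k).ne'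
      have hcomp := (hslope.comp hy).mul_const (u₁ x - u x)
      have hLx : L x = f' (u x) * (u₁ x - u x) := by simp [hLdef]
      rw [hLx]
      refine Tendsto.congr (fun k => ?_) hcomp
      simp only [Function.comp_apply, hqdef, hwdef]
      rw [slope_def_field]
      rw [show (1 - ε k) * u x + ε k * u₁ x - u x = ε k * (u₁ x - u x) by ring]
      field_simp
  -- integrability of the limit
  have hLmeas : Measurable L := hmf'.mul (hu₁_meas.sub hu_meas)
  have hQLnn : ∀ x, 0 ≤ q 0 x - L x := fun x => sub_nonneg.2 (hql 0 x)
  have hQLmeas : Measurable fun x => q 0 x - L x := (hqmeas 0).sub hLmeas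
  have hbound : ∀ k, (∫⁻ x in Ω, ENNReal.ofReal (q 0 x - q k x))
      ≤ ENNReal.ofReal ((∫ x in Ω, q 0 x)
          - ((Tcost p μ ν).toReal - (Tcost p μ₁ ν).toReal)) := by
    intro k
    have h1 : Integrable (fun x => q 0 x - q k x) (volume.restrict Ω) := (hqI 0).sub (hqI k)
    have heq : (∫⁻ x in Ω, ENNReal.ofReal (q 0 x - q k x))
        = ENNReal.ofReal (∫ x in Ω, (q 0 x - q k x)) :=
      (ofReal_integral_eq_lintegral_ofReal h1
        (ae_of_all _ fun x => sub_nonneg.2 (hqanti x (Nat.zero_le k)))).symm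
    rw [heq]
    refine ENNReal.ofReal_le_ofReal ?_
    rw [integral_sub (hqI 0) (hqI k)]
    linarith [hkey k]
  have htendlin : Tendsto (fun k => ∫⁻ x in Ω, ENNReal.ofReal (q 0 x - q k x)) atTop
      (𝓝 (∫⁻ x in Ω, ENNReal.ofReal (q 0 x - L x))) := by
    refine lintegral_tendsto_of_tendsto_of_monotone
      (fun k => ((hqmeas 0).sub (hqmeas k)).ennreal_ofReal.aemeasurable) ?_ ?_
    · refine ae_of_all _ fun x k m hkm => ?_
      exact ENNReal.ofReal_le_ofReal (by linarith [hqanti x hkm])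
    · refine ae_of_all _ fun x => ?_
      exact (ENNReal.continuous_ofReal.tendsto _).comp
        (tendsto_const_nhds.sub (hqtend x))
  have hQLlt : (∫⁻ x in Ω, ENNReal.ofReal (q 0 x - L x)) < ⊤ :=
    lt_of_le_of_lt (le_of_tendsto htendlin (Eventually.of_forall hbound))
      ENNReal.ofReal_lt_top
  have hQLint : Integrable (fun x => q 0 x - L x) (volume.restrict Ω) :=
    ⟨hQLmeas.aestronglyMeasurable, (hasFiniteIntegral_iff_ofReal (ae_of_all _ hQLnn)).2 hQLlt⟩
  have hLint : Integrable L (volume.restrict Ω) := by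
    have h2 := (hqI 0).sub hQLint
    exact h2.congr (ae_of_all _ fun x => by simp)
  have htendI : Tendsto (fun k => ∫ x in Ω, q k x) atTop (𝓝 (∫ x in Ω, L x)) :=
    integral_tendsto_of_tendsto_of_antitone hqI hLint (ae_of_all _ hqanti)
      (ae_of_all _ hqtend)
  have hfinal : (Tcost p μ ν).toReal - (Tcost p μ₁ ν).toReal ≤ ∫ x in Ω, L x :=
    ge_of_tendsto' htendI hkey
  linarith [hfinal]
end

section
/- Let Ω ⊂ ℝ^n be a bounded domain and p ≥ 1. Suppose ν = ν^s + v·ℒ^n, where ν^s is singular with respect to Lebesgue measure, v ∈ L^∞(Ω), and v > 0 almost everywhere in Ω. If μ = u·ℒ^n minimizes 𝔉^p_ν over probability measures on Ω, then u > 0 almost everywhere in Ω. -/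
open MeasureTheory Set Filter Topology Metric
open scoped ENNReal NNReal

noncomputable section HelperLemmas
variable {n : ℕ}

lemma densOn_eq (Ω : Set (Rn n)) (hΩ : MeasurableSet Ω) (u : Rn n → ℝ) :
    densOn Ω u = (volume : Measure (Rn n)).withDensity (Ω.indicator fun x => ENNReal.ofReal (u x)) :=
  (withDensity_indicator hΩ _).symm

lemma densOn_ac (Ω : Set (Rn n)) (u : Rn n → ℝ) : densOn Ω u ≪ (volume : Measure (Rn n)) :=
  (withDensity_absolutelyContinuous _ _).trans
    (Measure.absolutelyContinuous_of_le Measure.restrict_le_self)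

lemma densOn_rnDeriv (Ω : Set (Rn n)) (hΩ : MeasurableSet Ω) (u : Rn n → ℝ) (hu : Measurable u) :
    (densOn Ω u).rnDeriv volume =ᵐ[volume] Ω.indicator fun x => ENNReal.ofReal (u x) := by
  rw [densOn_eq Ω hΩ u]
  exact Measure.rnDeriv_withDensity volume ((hu.ennreal_ofReal).indicator hΩ)

lemma Ffun_densOn (f : ℝ → ℝ) (Ω : Set (Rn n)) (hΩ : MeasurableSet Ω)
    (u : Rn n → ℝ) (hu : Measurable u) (hu0 : ∀ x, 0 ≤ u x) :
    Ffun f Ω (densOn Ω u) = ∫⁻ x in Ω, ENNReal.ofReal (f (u x)) := by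
  rw [Ffun, if_pos (densOn_ac Ω u)]
  refine lintegral_congr_ae ?_
  filter_upwards [ae_restrict_of_ae (densOn_rnDeriv Ω hΩ u hu), ae_restrict_mem hΩ] with x hx hxΩ
  rw [hx, indicator_of_mem hxΩ, ENNReal.toReal_ofReal (hu0 x)]

lemma densOn_compl_eq_zero (Ω : Set (Rn n)) (hΩ : MeasurableSet Ω) (u : Rn n → ℝ) :
    densOn Ω u Ωᶜ = 0 := by
  rw [densOn, withDensity_apply _ hΩ.compl, Measure.restrict_restrict hΩ.compl,
    compl_inter_self, Measure.restrict_empty, lintegral_zero_measure]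

lemma f_monoOn (f : ℝ → ℝ) (hf_nonneg : ∀ t : ℝ, 0 ≤ t → 0 ≤ f t) (hf0 : f 0 = 0)
    (hconv : ConvexOn ℝ (Ici 0) f) : MonotoneOn f (Ici 0) := by
  intro a ha b hb hab
  rcases eq_or_lt_of_le hab with rfl | hlt
  · exact le_rfl
  have hb0 : 0 < b := lt_of_le_of_lt ha hlt
  have ht0 : 0 ≤ a / b := div_nonneg ha hb0.le
  have ht1 : a / b ≤ 1 := (div_le_one hb0).2 hab
  have := hconv.2 (self_mem_Ici) hb (by linarith : (0:ℝ) ≤ 1 - a / b) ht0 (by ring)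
  have heq : (1 - a / b) • (0:ℝ) + (a / b) • b = a := by
    simp only [smul_eq_mul, mul_zero, zero_add]; exact div_mul_cancel₀ a hb0.ne'
  rw [heq] at this
  have hfb := hf_nonneg b hb
  calc f a ≤ (1 - a/b) * f 0 + (a/b) * f b := this
    _ = (a/b) * f b := by rw [hf0]; ring
    _ ≤ 1 * f b := by nlinarith
    _ = f b := one_mul _

lemma cost_measurable (p : ℝ) (hp : 0 ≤ p) :
    Measurable fun z : Rn n × Rn n => ENNReal.ofReal (‖z.1 - z.2‖ ^ p) := by
  have hc : Continuous fun x : ℝ => x ^ p :=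
    continuous_iff_continuousAt.2 fun x => Real.continuousAt_rpow_const x p (Or.inr hp)
  exact (hc.comp ((continuous_fst.sub continuous_snd).norm)).measurable.ennreal_ofReal

lemma Tcost_lt_top (p : ℝ) (hp : 0 ≤ p) (Ω : Set (Rn n)) (hΩb : Bornology.IsBounded Ω)
    (hΩmeas : MeasurableSet Ω)
    (μ ν : Measure (Rn n)) (hμ : ProbOn Ω μ) (hν : ProbOn Ω ν) :
    Tcost p μ ν < ⊤ := by
  haveI := hμ.1; haveI := hν.1
  obtain ⟨R, hR⟩ := hΩb.subset_closedBall 0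
  set R' : ℝ := max R 0 with hR'
  have hΩR : Ω ⊆ closedBall 0 R' := hR.trans (closedBall_subset_closedBall (le_max_left _ _))
  have hcoup : μ.prod ν ∈ Couplings μ ν := by
    refine ⟨inferInstance, ?_, ?_⟩
    · rw [Measure.map_fst_prod, measure_univ, one_smul]
    · rw [Measure.map_snd_prod, measure_univ, one_smul]
  have hle : Tcost p μ ν ≤ ∫⁻ z, ENNReal.ofReal (‖z.1 - z.2‖ ^ p) ∂(μ.prod ν) :=
    iInf_le_of_le (μ.prod ν) (iInf_le_of_le hcoup le_rfl)
  have hnull : (μ.prod ν) ((Ω ×ˢ Ω)ᶜ) = 0 := by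
    rw [Set.compl_prod_eq_union]
    refine measure_union_null ?_ ?_
    · rw [Measure.prod_prod, hμ.2, zero_mul]
    · rw [Measure.prod_prod, hν.2, mul_zero]
  refine lt_of_le_of_lt hle ?_
  rw [← lintegral_add_compl _ (hΩmeas.prod hΩmeas),
    setLIntegral_measure_zero _ _ hnull, add_zero]
  calc ∫⁻ z in Ω ×ˢ Ω, ENNReal.ofReal (‖z.1 - z.2‖ ^ p) ∂(μ.prod ν)
      ≤ ∫⁻ _ in Ω ×ˢ Ω, ENNReal.ofReal ((2 * R') ^ p) ∂(μ.prod ν) := by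
        refine setLIntegral_mono measurable_const ?_
        intro z hz
        refine ENNReal.ofReal_le_ofReal (Real.rpow_le_rpow (norm_nonneg _) ?_ hp)
        have h1 : ‖z.1‖ ≤ R' := mem_closedBall_zero_iff.1 (hΩR hz.1)
        have h2 : ‖z.2‖ ≤ R' := mem_closedBall_zero_iff.1 (hΩR hz.2)
        calc ‖z.1 - z.2‖ ≤ ‖z.1‖ + ‖z.2‖ := norm_sub_le _ _
          _ ≤ 2 * R' := by linarith
    _ = ENNReal.ofReal ((2 * R') ^ p) * (μ.prod ν) (Ω ×ˢ Ω) := setLIntegral_const _ _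
    _ ≤ ENNReal.ofReal ((2 * R') ^ p) * 1 := mul_le_mul_right prob_le_one _
    _ < ⊤ := by rw [mul_one]; exact ENNReal.ofReal_lt_top

end HelperLemmas
set_option maxHeartbeats 2000000 in
/-- if `ν` has a.e. positive absolutely continuous part, the optimal
density `u` is a.e. positive in `Ω`. -/
theorem statement_2 {n : ℕ} (Ω : Set (Rn n)) (hΩ : IsBoundedDomain Ω)
    (p : ℝ) (hp : 1 ≤ p) (f f' : ℝ → ℝ)
    (hf_nonneg : ∀ t : ℝ, 0 ≤ t → 0 ≤ f t) (hf0 : f 0 = 0)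
    (hf_sconv : StrictConvexOn ℝ (Ici 0) f)
    (hf_deriv : ∀ t ∈ Ici (0:ℝ), HasDerivWithinAt f (f' t) (Ici 0) t)
    (hf'_cont : ContinuousOn f' (Ici 0)) (hf'0 : f' 0 = 0)
    (hf_super : Tendsto (fun t => f t / t) atTop atTop)
    (νs : Measure (Rn n)) (hνs : νs ⟂ₘ (volume : Measure (Rn n)))
    (v : Rn n → ℝ) (hv_meas : Measurable v)
    (C : ℝ) (hv_bdd : ∀ᵐ x ∂(volume.restrict Ω), v x ≤ C)
    (hv_pos : ∀ᵐ x ∂(volume.restrict Ω), 0 < v x)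
    (ν : Measure (Rn n)) (hν : ν = νs + densOn Ω v) (hνP : ProbOn Ω ν)
    (u : Rn n → ℝ) (hu_meas : Measurable u) (hu_nonneg : ∀ x, 0 ≤ u x)
    (μ : Measure (Rn n)) (hμ : μ = densOn Ω u) (hμP : ProbOn Ω μ)
    (hmin : ∀ μ' : Measure (Rn n), ProbOn Ω μ' → FFnu p f Ω ν μ ≤ FFnu p f Ω ν μ') :
    ∀ᵐ x ∂(volume.restrict Ω), 0 < u x := by
  classical
  obtain ⟨U, hUopen, hUne, -, hUbdd, hΩU, -⟩ := hΩ
  have hΩmeas : MeasurableSet Ω := by rw [hΩU]; exact isClosed_closure.measurableSet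
  have hΩbdd : Bornology.IsBounded Ω := by rw [hΩU]; exact hUbdd.closure
  have hΩpos : 0 < volume Ω := by
    rw [hΩU]
    exact lt_of_lt_of_le (hUopen.measure_pos volume hUne) (measure_mono subset_closure)
  have hΩfin : volume Ω < ⊤ := hΩbdd.measure_lt_top
  haveI hμprob : IsProbabilityMeasure μ := hμP.1
  haveI hνprob : IsProbabilityMeasure ν := hνP.1
  have hp0 : (0:ℝ) ≤ p := le_trans zero_le_one hp
  have hfmono : MonotoneOn f (Ici 0) := f_monoOn f hf_nonneg hf0 hf_sconv.convexOn
  by_contra hcon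
  -- the bad set
  have hAmeas : MeasurableSet {x : Rn n | ¬ 0 < u x} := by
    have : {x : Rn n | ¬ 0 < u x} = u ⁻¹' (Iic 0) := by ext x; simp [not_lt]
    rw [this]; exact hu_meas measurableSet_Iic
  rw [ae_iff, Measure.restrict_apply hAmeas] at hcon
  obtain ⟨s, hsmeas, hνs_s, hs_compl⟩ := hνs
  have hPmeas : MeasurableSet {x : Rn n | 0 < v x} := by
    have : {x : Rn n | 0 < v x} = v ⁻¹' (Ioi 0) := rfl
    rw [this]; exact hv_meas measurableSet_Ioi
  have hP0 : volume ({x : Rn n | ¬ 0 < v x} ∩ Ω) = 0 := by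
    have h := hv_pos
    rw [ae_iff, Measure.restrict_apply] at h
    · exact h
    · have : {x : Rn n | ¬ 0 < v x} = {x : Rn n | 0 < v x}ᶜ := by ext x; simp
      rw [this]; exact hPmeas.compl
  set A₀ : Set (Rn n) := (({x : Rn n | ¬ 0 < u x} ∩ Ω) ∩ s) ∩ {x : Rn n | 0 < v x} with hA₀def
  have hA₀meas : MeasurableSet A₀ := ((hAmeas.inter hΩmeas).inter hsmeas).inter hPmeas
  have hA₀pos : 0 < volume A₀ := by
    rw [pos_iff_ne_zero]
    intro h0
    apply hcon
    have hsub : {x : Rn n | ¬ 0 < u x} ∩ Ω ⊆ A₀ ∪ (sᶜ ∪ ({x : Rn n | ¬ 0 < v x} ∩ Ω)) := by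
      intro x hx
      by_cases hxs : x ∈ s
      · by_cases hxv : 0 < v x
        · exact Or.inl ⟨⟨hx, hxs⟩, hxv⟩
        · exact Or.inr (Or.inr ⟨hxv, hx.2⟩)
      · exact Or.inr (Or.inl hxs)
    exact measure_mono_null hsub
      (measure_union_null h0 (measure_union_null hs_compl hP0))
  obtain ⟨K, hKA₀, hKcomp, hKpos⟩ := hA₀meas.exists_lt_isCompact hA₀pos
  have hKmeas : MeasurableSet K := hKcomp.isClosed.measurableSet
  have hKΩ : K ⊆ Ω := fun x hx => (hKA₀ hx).1.1.2
  have hKu : ∀ x ∈ K, u x = 0 := fun x hx =>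
    le_antisymm (not_lt.1 (hKA₀ hx).1.1.1) (hu_nonneg x)
  have hKv : ∀ x ∈ K, 0 < v x := fun x hx => (hKA₀ hx).2
  have hKs : K ⊆ s := fun x hx => (hKA₀ hx).1.2
  -- μ gives no mass to K
  have hμK : μ K = 0 := by
    rw [hμ, densOn, withDensity_apply _ hKmeas, Measure.restrict_restrict hKmeas,
      inter_eq_self_of_subset_left hKΩ]
    have hz : ∀ᵐ x ∂(volume.restrict K), ENNReal.ofReal (u x) = 0 := by
      refine (ae_restrict_iff' hKmeas).2 (ae_of_all _ fun x hx => ?_)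
      rw [hKu x hx, ENNReal.ofReal_zero]
    rw [lintegral_congr_ae hz, lintegral_zero]
  -- mass of ν on K
  have hνsK : νs K = 0 := le_antisymm (le_trans (measure_mono hKs) hνs_s.le) (zero_le)
  have hmfin : ν K ≠ ⊤ := (measure_lt_top ν K).ne
  have hm_pos : 0 < ν K := by
    rw [hν, Measure.add_apply, hνsK, zero_add, densOn, withDensity_apply _ hKmeas,
      Measure.restrict_restrict hKmeas, inter_eq_self_of_subset_left hKΩ,
      lintegral_pos_iff_support hv_meas.ennreal_ofReal]
    refine lt_of_lt_of_le hKpos ?_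
    have hsupp : K ⊆ Function.support fun x => ENNReal.ofReal (v x) := fun x hx => by
      simp only [Function.mem_support, ne_eq, ENNReal.ofReal_eq_zero, not_le]
      exact hKv x hx
    calc volume K = (volume.restrict K) K := (Measure.restrict_apply_self _ _).symm
      _ ≤ (volume.restrict K) (Function.support fun x => ENNReal.ofReal (v x)) :=
          measure_mono hsupp
  -- choice of r via thickenings
  set Cth : ℕ → Set (Rn n) := fun j => Metric.cthickening (1 / (j + 1)) K with hCthdef
  have hCth_anti : Antitone Cth := by
    intro i j hij
    refine Metric.cthickening_mono ?_ _
    have h1 : (0:ℝ) < i + 1 := by positivity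
    refine one_div_le_one_div_of_le h1 ?_
    have : (i:ℝ) ≤ j := Nat.cast_le.2 hij
    linarith
  have hCth_inter : ⋂ j, Cth j = K := by
    apply subset_antisymm
    · intro x hx
      have hx' : ∀ j : ℕ, EMetric.infEdist x K ≤ ENNReal.ofReal (1 / (j + 1)) := fun j =>
        (Metric.mem_cthickening_iff).1 (mem_iInter.1 hx j)
      have htnd : Tendsto (fun j : ℕ => ENNReal.ofReal (1 / (j + 1))) atTop (𝓝 0) := by
        have : Tendsto (fun j : ℕ => (1:ℝ) / (j + 1)) atTop (𝓝 0) :=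
          tendsto_one_div_add_atTop_nhds_zero_nat
        have h2 := (ENNReal.continuous_ofReal.tendsto 0).comp this
        simpa [Function.comp_def] using h2
      have h0 : EMetric.infEdist x K = 0 :=
        le_antisymm (ge_of_tendsto htnd (Filter.Eventually.of_forall hx')) (zero_le)
      rw [← hKcomp.isClosed.closure_eq]
      exact EMetric.mem_closure_iff_infEdist_zero.2 h0
    · intro x hx; exact mem_iInter.2 fun j => Metric.self_subset_cthickening _ hx
  have htendμ : Tendsto (fun j => μ (Cth j)) atTop (𝓝 (μ K)) := by
    have h := tendsto_measure_iInter_atTop (μ := μ)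
      (fun j => (Metric.isClosed_cthickening.measurableSet).nullMeasurableSet) hCth_anti
      ⟨0, (measure_lt_top μ _).ne⟩
    rw [hCth_inter] at h
    exact h
  have hhalfpos : 0 < ν K / 2 := ENNReal.div_pos hm_pos.ne' (by norm_num)
  obtain ⟨j, hj⟩ := (htendμ.eventually_lt_const (show μ K < ν K / 2 by rw [hμK]; exact hhalfpos)).exists
  set r : ℝ := 1 / (j + 1) with hrdef
  have hrpos : 0 < r := by positivity
  -- C is positive
  have hrestr_ne : (volume.restrict Ω : Measure (Rn n)) ≠ 0 := by
    intro h0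
    have h1 : (volume.restrict Ω) univ = volume Ω := by
      rw [Measure.restrict_apply_univ]
    rw [h0] at h1
    simp at h1
    exact hΩpos.ne' h1.symm
  haveI : (ae (volume.restrict Ω)).NeBot := ae_neBot.2 hrestr_ne
  obtain ⟨x₀, hx₀v, hx₀C⟩ := (hv_pos.and hv_bdd).exists
  have hC : 0 < C := lt_of_lt_of_le hx₀v hx₀C
  -- F(μ) explicit and finiteness of FFnu μ
  have hFμ_eq : Ffun f Ω μ = ∫⁻ x in Ω, ENNReal.ofReal (f (u x)) := by
    rw [hμ]; exact Ffun_densOn f Ω hΩmeas u hu_meas hu_nonneg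
  set c₁ : ℝ := (volume Ω).toReal⁻¹ with hc₁def
  have hc₁pos : 0 < c₁ := inv_pos.2 (ENNReal.toReal_pos hΩpos.ne' hΩfin.ne)
  have hμLP : ProbOn Ω (densOn Ω (fun _ => c₁)) := by
    constructor
    · constructor
      rw [densOn, withDensity_apply _ MeasurableSet.univ, Measure.restrict_univ,
        lintegral_const, Measure.restrict_apply_univ,
        ENNReal.ofReal_inv_of_pos (ENNReal.toReal_pos hΩpos.ne' hΩfin.ne),
        ENNReal.ofReal_toReal hΩfin.ne]
      exact ENNReal.inv_mul_cancel hΩpos.ne' hΩfin.ne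
    · exact densOn_compl_eq_zero Ω hΩmeas _
  have hFFμ_fin : FFnu p f Ω ν μ < ⊤ := by
    refine lt_of_le_of_lt (hmin _ hμLP) ?_
    rw [FFnu]
    refine ENNReal.add_lt_top.2 ⟨Tcost_lt_top p hp0 Ω hΩbdd hΩmeas _ ν hμLP hνP, ?_⟩
    rw [Ffun_densOn f Ω hΩmeas _ measurable_const (fun _ => hc₁pos.le), setLIntegral_const]
    exact ENNReal.mul_lt_top ENNReal.ofReal_lt_top hΩfin
  have hTfin : Tcost p μ ν ≠ ⊤ := by
    intro h
    rw [FFnu, h] at hFFμ_fin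
    simp at hFFμ_fin
  have hFfin : Ffun f Ω μ ≠ ⊤ := by
    intro h
    rw [FFnu, h] at hFFμ_fin
    simp at hFFμ_fin
  -- key constants
  have hvK_ne0 : volume K ≠ 0 := hKpos.ne'
  have hvKfin : volume K ≠ ⊤ := (lt_of_le_of_lt (measure_mono hKΩ) hΩfin).ne
  set c₀ : ℝ≥0∞ := ENNReal.ofReal (r ^ p) * (ν K / 2) with hc₀def
  have hc₀pos : 0 < c₀ :=
    ENNReal.mul_pos (ENNReal.ofReal_pos.2 (Real.rpow_pos_of_pos hrpos p)).ne' hhalfpos.ne'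
  have hc₀fin : c₀ ≠ ⊤ := by
    refine ENNReal.mul_ne_top ENNReal.ofReal_ne_top ?_
    exact (ENNReal.div_lt_top hmfin (by norm_num)).ne
  set β : ℝ≥0∞ := (c₀ / 4) / volume K with hβdef
  have hc₀4pos : (0:ℝ≥0∞) < c₀ / 4 := ENNReal.div_pos hc₀pos.ne' (by norm_num)
  have hβpos : 0 < β := ENNReal.div_pos hc₀4pos.ne' hvKfin
  have hminβ_ne0 : min β 1 ≠ 0 := (lt_min hβpos zero_lt_one).ne'
  have hminβ_fin : min β 1 ≠ ⊤ := (lt_of_le_of_lt (min_le_right _ _) ENNReal.one_lt_top).ne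
  set η : ℝ := (min β 1).toReal / 2 with hηdef
  have hηpos : 0 < η := div_pos (ENNReal.toReal_pos hminβ_ne0 hminβ_fin) two_pos
  have hofRealη : ENNReal.ofReal η ≤ β := by
    calc ENNReal.ofReal η ≤ ENNReal.ofReal ((min β 1).toReal) := by
          refine ENNReal.ofReal_le_ofReal ?_
          have := ENNReal.toReal_nonneg (a := min β 1)
          rw [hηdef]; linarith
      _ = min β 1 := ENNReal.ofReal_toReal hminβ_fin
      _ ≤ β := min_le_left _ _
  -- slope limit at 0
  have hslope : Tendsto (fun h : ℝ => f h / h) (𝓝[>] (0:ℝ)) (𝓝 0) := by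
    have h0 := (hasDerivWithinAt_iff_tendsto_slope).1 (hf_deriv 0 self_mem_Ici)
    rw [hf'0] at h0
    have hset : (Ici (0:ℝ)) \ {0} = Ioi 0 := by
      ext x
      simp only [mem_diff, mem_Ici, mem_singleton_iff, mem_Ioi]
      constructor
      · rintro ⟨h1, h2⟩; exact lt_of_le_of_ne h1 (Ne.symm h2)
      · intro h1; exact ⟨h1.le, h1.ne'⟩
    rw [hset] at h0
    refine h0.congr ?_
    intro x
    rw [slope_def_field, hf0, sub_zero, sub_zero]
  have hev1 : ∀ᶠ h in 𝓝[>] (0:ℝ), f h / h < η / C :=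
    hslope.eventually_lt_const (by positivity)
  have hev2 : ∀ᶠ h in 𝓝[>] (0:ℝ), h < C :=
    eventually_nhdsWithin_of_eventually_nhds (gt_mem_nhds hC)
  have hev3 : ∀ᶠ h in 𝓝[>] (0:ℝ), 0 < h :=
    eventually_mem_nhdsWithin.mono (fun x hx => hx)
  obtain ⟨h₀, hh₀slope, hh₀C, hh₀pos⟩ := (hev1.and (hev2.and hev3)).exists
  set ε : ℝ := h₀ / C with hεdef
  have hεpos : 0 < ε := div_pos hh₀pos hC
  have hε1 : ε < 1 := (div_lt_one hC).2 hh₀C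
  have hεC : ε * C = h₀ := by rw [hεdef]; field_simp
  have hfεC : f (ε * C) < η * ε := by
    rw [hεC]
    rw [div_lt_div_iff₀ hh₀pos hC] at hh₀slope
    rw [hεdef]
    rw [lt_div_iff₀ hC] at *
    nlinarith [hh₀slope]
  set ε' : ℝ≥0∞ := ENNReal.ofReal ε with hε'def
  have hε'pos : ε' ≠ 0 := (ENNReal.ofReal_pos.2 hεpos).ne'
  have hε'fin : ε' ≠ ⊤ := ENNReal.ofReal_ne_top
  have hε'le1 : ε' ≤ 1 := ENNReal.ofReal_le_one.2 hε1.le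
  have hsmall : ENNReal.ofReal (f (ε * C)) * volume K ≤ ε' * (c₀ / 4) := by
    have h1 : ENNReal.ofReal (f (ε * C)) ≤ ε' * ENNReal.ofReal η := by
      rw [hε'def, ← ENNReal.ofReal_mul hεpos.le]
      exact ENNReal.ofReal_le_ofReal (by nlinarith [hfεC])
    calc ENNReal.ofReal (f (ε * C)) * volume K
        ≤ (ε' * ENNReal.ofReal η) * volume K := mul_le_mul_left h1 _
      _ ≤ (ε' * β) * volume K := mul_le_mul_left (mul_le_mul_right hofRealη _) _
      _ = ε' * (β * volume K) := by rw [mul_assoc]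
      _ = ε' * (c₀ / 4) := by rw [hβdef, ENNReal.div_mul_cancel hvK_ne0 hvKfin]
  -- choose a near-optimal coupling
  set δ : ℝ≥0∞ := ε' * (c₀ / 4) with hδdef
  have hδ0 : δ ≠ 0 := mul_ne_zero hε'pos hc₀4pos.ne'
  have hTlt : Tcost p μ ν < Tcost p μ ν + δ := ENNReal.lt_add_right hTfin hδ0
  obtain ⟨γ, hγmem, hγcost⟩ :
      ∃ γ ∈ Couplings μ ν,
        ∫⁻ z, ENNReal.ofReal (‖z.1 - z.2‖ ^ p) ∂γ < Tcost p μ ν + δ := by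
    have h2 := hTlt
    conv_lhs at h2 => rw [Tcost]
    rw [iInf_lt_iff] at h2
    obtain ⟨γ, h2⟩ := h2
    rw [iInf_lt_iff] at h2
    obtain ⟨hmem, h2⟩ := h2
    exact ⟨γ, hmem, h2⟩
  obtain ⟨hγprob, hγfst, hγsnd⟩ := hγmem
  haveI := hγprob
  have hcmeas : Measurable fun z : Rn n × Rn n => ENNReal.ofReal (‖z.1 - z.2‖ ^ p) :=
    cost_measurable p hp0
  set E : Set (Rn n × Rn n) := Prod.snd ⁻¹' K with hEdef
  have hEmeas : MeasurableSet E := measurable_snd hKmeas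
  set γ₁ := γ.restrict Eᶜ with hγ₁def
  set γ₂ := γ.restrict E with hγ₂def
  have hdiag : Measurable fun y : Rn n => (y, y) := measurable_id.prodMk measurable_id
  set ρ := (ν.restrict K).map (fun y => (y, y)) with hρdef
  set γ' := γ₁ + (1 - ε') • γ₂ + ε' • ρ with hγ'def
  have hγ12 : γ₁ + γ₂ = γ := by
    rw [hγ₁def, hγ₂def]
    have h := Measure.restrict_add_restrict_compl (μ := γ) hEmeas.compl
    rwa [compl_compl] at h
  have hγ₂snd : γ₂.map Prod.snd = ν.restrict K := by
    rw [hγ₂def, hEdef, ← Measure.restrict_map measurable_snd hKmeas, hγsnd]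
  have hγ₁snd : γ₁.map Prod.snd = ν.restrict Kᶜ := by
    rw [hγ₁def, hEdef, ← preimage_compl, ← Measure.restrict_map measurable_snd hKmeas.compl, hγsnd]
  have hdiag_snd : (Prod.snd ∘ fun y : Rn n => (y, y)) = id := rfl
  have hdiag_fst : (Prod.fst ∘ fun y : Rn n => (y, y)) = id := rfl
  have hρsnd : ρ.map Prod.snd = ν.restrict K := by
    rw [hρdef, Measure.map_map measurable_snd hdiag, hdiag_snd, Measure.map_id]
  have hρfst : ρ.map Prod.fst = ν.restrict K := by
    rw [hρdef, Measure.map_map measurable_fst hdiag, hdiag_fst, Measure.map_id]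
  have hγ'snd : γ'.map Prod.snd = ν := by
    rw [hγ'def, Measure.map_add _ _ measurable_snd, Measure.map_add _ _ measurable_snd,
      Measure.map_smul, Measure.map_smul, hγ₁snd, hγ₂snd, hρsnd, add_assoc, ← add_smul,
      tsub_add_cancel_of_le hε'le1, one_smul, add_comm,
      Measure.restrict_add_restrict_compl hKmeas]
  set σ := γ₂.map Prod.fst with hσdef
  set τ := γ₁.map Prod.fst with hτdef
  have hτσ : τ + σ = μ := by
    rw [hτdef, hσdef, ← Measure.map_add _ _ measurable_fst, hγ12, hγfst]
  set μ' := γ'.map Prod.fst with hμ'def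
  have hμ'_decomp : μ' = τ + (1 - ε') • σ + ε' • (ν.restrict K) := by
    rw [hμ'def, hγ'def, Measure.map_add _ _ measurable_fst, Measure.map_add _ _ measurable_fst,
      Measure.map_smul, Measure.map_smul, hρfst, hτdef, hσdef]
  have hγE : γ E = ν K := by
    rw [hEdef, ← Measure.map_apply measurable_snd hKmeas, hγsnd]
  have hγ'univ : γ' univ = 1 := by
    rw [hγ'def]
    simp only [Measure.add_apply, Measure.smul_apply, smul_eq_mul]
    rw [hγ₁def, hγ₂def, Measure.restrict_apply_univ, Measure.restrict_apply_univ, hρdef]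
    rw [Measure.map_apply hdiag MeasurableSet.univ, preimage_univ, Measure.restrict_apply_univ]
    have h1 : (1 - ε') * γ E + ε' * ν K = ν K := by
      rw [hγE, ← add_mul, tsub_add_cancel_of_le hε'le1, one_mul]
    rw [add_assoc, h1, ← hγE, add_comm, measure_add_measure_compl hEmeas, measure_univ]
  haveI hγ'prob : IsProbabilityMeasure γ' := ⟨hγ'univ⟩
  haveI hμ'prob : IsProbabilityMeasure μ' := by
    rw [hμ'def]; exact Measure.isProbabilityMeasure_map measurable_fst.aemeasurable
  have hτle : τ ≤ μ := by rw [← hτσ]; exact Measure.le_add_right le_rfl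
  have hσle : σ ≤ μ := by rw [← hτσ]; exact Measure.le_add_left le_rfl
  have hμ'Ωc : μ' Ωᶜ = 0 := by
    rw [hμ'_decomp]
    simp only [Measure.add_apply, Measure.smul_apply, smul_eq_mul]
    have h1 : τ Ωᶜ = 0 :=
      le_antisymm (le_trans (Measure.le_iff'.1 hτle Ωᶜ) (le_of_eq hμP.2)) (zero_le)
    have h2 : σ Ωᶜ = 0 :=
      le_antisymm (le_trans (Measure.le_iff'.1 hσle Ωᶜ) (le_of_eq hμP.2)) (zero_le)
    have h3 : (ν.restrict K) Ωᶜ = 0 :=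
      le_antisymm (le_trans (Measure.le_iff'.1 Measure.restrict_le_self Ωᶜ)
        (le_of_eq hνP.2)) (zero_le)
    rw [h1, h2, h3, mul_zero, mul_zero, add_zero, add_zero]
  have hμ'P : ProbOn Ω μ' := ⟨hμ'prob, hμ'Ωc⟩
  have hγ'mem : γ' ∈ Couplings μ' ν := ⟨hγ'prob, hμ'def.symm, hγ'snd⟩
  have hTμ'le : Tcost p μ' ν ≤ ∫⁻ z, ENNReal.ofReal (‖z.1 - z.2‖ ^ p) ∂γ' :=
    iInf_le_of_le γ' (iInf_le_of_le hγ'mem le_rfl)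
  -- cost bookkeeping
  have hcostρ : ∫⁻ z, ENNReal.ofReal (‖z.1 - z.2‖ ^ p) ∂ρ = 0 := by
    rw [hρdef, lintegral_map hcmeas hdiag]
    have hz : ∀ y : Rn n, ENNReal.ofReal (‖(y, y).1 - (y, y).2‖ ^ p) = 0 := fun y => by
      simp only [sub_self, norm_zero]
      rw [Real.zero_rpow (by linarith : p ≠ 0), ENNReal.ofReal_zero]
    simp only [hz, lintegral_zero]
  set cK : ℝ≥0∞ := ∫⁻ z, ENNReal.ofReal (‖z.1 - z.2‖ ^ p) ∂γ₂ with hcKdef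
  have hcostγ : ∫⁻ z, ENNReal.ofReal (‖z.1 - z.2‖ ^ p) ∂γ
      = ∫⁻ z, ENNReal.ofReal (‖z.1 - z.2‖ ^ p) ∂γ₁ + cK := by
    rw [← hγ12, lintegral_add_measure]
  have hcostγ' : ∫⁻ z, ENNReal.ofReal (‖z.1 - z.2‖ ^ p) ∂γ' + ε' * cK
      = ∫⁻ z, ENNReal.ofReal (‖z.1 - z.2‖ ^ p) ∂γ := by
    rw [hγ'def, lintegral_add_measure, lintegral_add_measure, lintegral_smul_measure,
      lintegral_smul_measure, hcostρ, smul_zero, add_zero, hcostγ, smul_eq_mul]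
    rw [add_assoc, ← add_mul, tsub_add_cancel_of_le hε'le1, one_mul]
  have hcK_lb : c₀ ≤ cK := by
    set G : Set (Rn n × Rn n) := {z | r ≤ dist z.1 z.2} with hGdef
    have hGmeas : MeasurableSet G :=
      measurableSet_le measurable_const (measurable_fst.dist measurable_snd)
    have hsub : E \ G ⊆ Prod.fst ⁻¹' (Cth j) := by
      intro z hz
      exact Metric.mem_cthickening_of_dist_le z.1 z.2 _ _ hz.1 (le_of_lt (not_le.1 hz.2))
    have h1 : γ (E \ G) ≤ μ (Cth j) := by
      calc γ (E \ G) ≤ γ (Prod.fst ⁻¹' (Cth j)) := measure_mono hsub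
        _ = μ (Cth j) := by
            rw [← hγfst, Measure.map_apply measurable_fst
              Metric.isClosed_cthickening.measurableSet]
    have h2 : ν K ≤ γ (E ∩ G) + ν K / 2 := by
      calc ν K = γ E := hγE.symm
        _ = γ ((E ∩ G) ∪ (E \ G)) := by rw [inter_union_diff]
        _ ≤ γ (E ∩ G) + γ (E \ G) := measure_union_le _ _
        _ ≤ γ (E ∩ G) + ν K / 2 := add_le_add le_rfl (h1.trans hj.le)
    have h3 : ν K / 2 ≤ γ (E ∩ G) := by
      have h4 := tsub_le_iff_right.2 h2
      rwa [ENNReal.sub_half hmfin] at h4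
    calc c₀ = ENNReal.ofReal (r ^ p) * (ν K / 2) := hc₀def
      _ ≤ ENNReal.ofReal (r ^ p) * γ (E ∩ G) := mul_le_mul_right h3 _
      _ = ∫⁻ _ in E ∩ G, ENNReal.ofReal (r ^ p) ∂γ := (setLIntegral_const _ _).symm
      _ ≤ ∫⁻ z in E ∩ G, ENNReal.ofReal (‖z.1 - z.2‖ ^ p) ∂γ := by
          refine setLIntegral_mono hcmeas fun z hz => ?_
          refine ENNReal.ofReal_le_ofReal (Real.rpow_le_rpow hrpos.le ?_ hp0)
          rw [← dist_eq_norm]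
          exact hz.2
      _ ≤ ∫⁻ z in E, ENNReal.ofReal (‖z.1 - z.2‖ ^ p) ∂γ :=
          lintegral_mono_set inter_subset_left
      _ = cK := by rw [hcKdef, hγ₂def]
  -- density of μ'
  have hμac : μ ≪ (volume : Measure (Rn n)) := by rw [hμ]; exact densOn_ac Ω u
  have hτac : τ ≪ (volume : Measure (Rn n)) :=
    (Measure.absolutelyContinuous_of_le hτle).trans hμac
  have hσac : σ ≪ (volume : Measure (Rn n)) :=
    (Measure.absolutelyContinuous_of_le hσle).trans hμac
  haveI : IsFiniteMeasure τ :=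
    ⟨lt_of_le_of_lt (Measure.le_iff'.1 hτle univ) (measure_lt_top μ univ)⟩
  haveI : IsFiniteMeasure σ :=
    ⟨lt_of_le_of_lt (Measure.le_iff'.1 hσle univ) (measure_lt_top μ univ)⟩
  set t := τ.rnDeriv volume with htdef
  set w := σ.rnDeriv volume with hwdef
  have htmeas : Measurable t := Measure.measurable_rnDeriv τ volume
  have hwmeas : Measurable w := Measure.measurable_rnDeriv σ volume
  have hτwd : volume.withDensity t = τ := Measure.withDensity_rnDeriv_eq τ volume hτac
  have hσwd : volume.withDensity w = σ := Measure.withDensity_rnDeriv_eq σ volume hσac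
  have htw : t + w =ᵐ[volume] Ω.indicator fun x => ENNReal.ofReal (u x) := by
    have h1 : (τ + σ).rnDeriv volume =ᵐ[volume] t + w := Measure.rnDeriv_add τ σ volume
    have h2 : (τ + σ).rnDeriv volume =ᵐ[volume] Ω.indicator fun x => ENNReal.ofReal (u x) := by
      rw [hτσ, hμ]; exact densOn_rnDeriv Ω hΩmeas u hu_meas
    exact h1.symm.trans h2
  have hKind_meas : Measurable (K.indicator fun x => ENNReal.ofReal (v x)) :=
    (hv_meas.ennreal_ofReal).indicator hKmeas
  have hνK_wd : ν.restrict K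
      = volume.withDensity (K.indicator fun x => ENNReal.ofReal (v x)) := by
    rw [hν, Measure.restrict_add, Measure.restrict_eq_zero.2 hνsK, zero_add, densOn,
      restrict_withDensity hKmeas, Measure.restrict_restrict hKmeas,
      inter_eq_self_of_subset_left hKΩ, ← withDensity_indicator hKmeas]
  set hfun : Rn n → ℝ≥0∞ :=
    t + (1 - ε') • w + ε' • (K.indicator fun x => ENNReal.ofReal (v x)) with hhfundef
  have hhmeas : Measurable hfun :=
    (htmeas.add (hwmeas.const_smul (1 - ε'))).add (hKind_meas.const_smul ε')
  have h12meas : Measurable (t + (1 - ε') • w) := by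
    exact htmeas.add (hwmeas.const_smul (1 - ε'))
  have hμ'wd : volume.withDensity hfun = μ' := by
    rw [hhfundef, hμ'_decomp, ← hτwd, ← hσwd, hνK_wd,
      withDensity_add_left h12meas,
      withDensity_add_left htmeas, withDensity_smul _ hwmeas, withDensity_smul _ hKind_meas]
  have hμ'ac : μ' ≪ (volume : Measure (Rn n)) :=
    hμ'wd ▸ withDensity_absolutelyContinuous volume hfun
  have hμ'rn : μ'.rnDeriv volume =ᵐ[volume] hfun := by
    rw [← hμ'wd]; exact Measure.rnDeriv_withDensity volume hhmeas
  have hFμ'_eq : Ffun f Ω μ' = ∫⁻ x in Ω, ENNReal.ofReal (f ((hfun x).toReal)) := by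
    rw [Ffun, if_pos hμ'ac]
    refine lintegral_congr_ae ?_
    filter_upwards [ae_restrict_of_ae hμ'rn] with x hx
    rw [hx]
  have hvC : ∀ᵐ x ∂(volume : Measure (Rn n)), x ∈ Ω → v x ≤ C :=
    (ae_restrict_iff' hΩmeas).1 hv_bdd
  -- bound on K
  have hbound_K : ∫⁻ x in K, ENNReal.ofReal (f ((hfun x).toReal))
      ≤ ENNReal.ofReal (f (ε * C)) * volume K := by
    have hae : ∀ᵐ x ∂(volume.restrict K),
        ENNReal.ofReal (f ((hfun x).toReal)) ≤ ENNReal.ofReal (f (ε * C)) := by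
      refine (ae_restrict_iff' hKmeas).2 ?_
      filter_upwards [htw, hvC] with x hx1 hx2 hxK
      have hxΩ : x ∈ Ω := hKΩ hxK
      have h0 : t x + w x = 0 := by
        have h5 : (t + w) x = Ω.indicator (fun x => ENNReal.ofReal (u x)) x := hx1
        rw [Pi.add_apply] at h5
        rw [h5, indicator_of_mem hxΩ, hKu x hxK, ENNReal.ofReal_zero]
      obtain ⟨ht0, hw0⟩ := add_eq_zero.1 h0
      have hh : hfun x = ENNReal.ofReal (ε * v x) := by
        rw [hhfundef]
        simp only [Pi.add_apply, Pi.smul_apply, smul_eq_mul]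
        rw [ht0, hw0, mul_zero, zero_add, zero_add, indicator_of_mem hxK,
          hε'def, ← ENNReal.ofReal_mul hεpos.le]
      rw [hh, ENNReal.toReal_ofReal (mul_nonneg hεpos.le (hKv x hxK).le)]
      refine ENNReal.ofReal_le_ofReal (hfmono ?_ ?_ ?_)
      · exact mem_Ici.2 (mul_nonneg hεpos.le (hKv x hxK).le)
      · exact mem_Ici.2 (mul_nonneg hεpos.le hC.le)
      · exact mul_le_mul_of_nonneg_left (hx2 hxΩ) hεpos.le
    calc ∫⁻ x in K, ENNReal.ofReal (f ((hfun x).toReal))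
        ≤ ∫⁻ _ in K, ENNReal.ofReal (f (ε * C)) := lintegral_mono_ae hae
      _ = ENNReal.ofReal (f (ε * C)) * volume K := setLIntegral_const _ _
  -- bound off K
  have hbound_diff : ∫⁻ x in Ω \ K, ENNReal.ofReal (f ((hfun x).toReal))
      ≤ ∫⁻ x in Ω, ENNReal.ofReal (f (u x)) := by
    have hae : ∀ᵐ x ∂(volume.restrict (Ω \ K)),
        ENNReal.ofReal (f ((hfun x).toReal)) ≤ ENNReal.ofReal (f (u x)) := by
      refine (ae_restrict_iff' (hΩmeas.diff hKmeas)).2 ?_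
      filter_upwards [htw] with x hx1 hxmem
      have hle : hfun x ≤ ENNReal.ofReal (u x) := by
        have h5 : hfun x = t x + (1 - ε') * w x := by
          rw [hhfundef]
          simp only [Pi.add_apply, Pi.smul_apply, smul_eq_mul]
          rw [indicator_of_notMem hxmem.2, mul_zero, add_zero]
        rw [h5]
        have h6 : (t + w) x = Ω.indicator (fun x => ENNReal.ofReal (u x)) x := hx1
        rw [Pi.add_apply] at h6
        calc t x + (1 - ε') * w x ≤ t x + 1 * w x :=
              add_le_add le_rfl (mul_le_mul_left tsub_le_self _)
          _ = t x + w x := by rw [one_mul]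
          _ = ENNReal.ofReal (u x) := by rw [h6, indicator_of_mem hxmem.1]
      have htr : (hfun x).toReal ≤ u x := ENNReal.toReal_le_of_le_ofReal (hu_nonneg x) hle
      exact ENNReal.ofReal_le_ofReal
        (hfmono (mem_Ici.2 ENNReal.toReal_nonneg) (mem_Ici.2 (hu_nonneg x)) htr)
    calc ∫⁻ x in Ω \ K, ENNReal.ofReal (f ((hfun x).toReal))
        ≤ ∫⁻ x in Ω \ K, ENNReal.ofReal (f (u x)) := lintegral_mono_ae hae
      _ ≤ ∫⁻ x in Ω, ENNReal.ofReal (f (u x)) := lintegral_mono_set diff_subset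
  have hFμ'_le : Ffun f Ω μ' ≤ Ffun f Ω μ + ε' * (c₀ / 4) := by
    rw [hFμ'_eq, hFμ_eq]
    calc ∫⁻ x in Ω, ENNReal.ofReal (f ((hfun x).toReal))
        = (∫⁻ x in Ω ∩ K, ENNReal.ofReal (f ((hfun x).toReal)))
          + ∫⁻ x in Ω \ K, ENNReal.ofReal (f ((hfun x).toReal)) :=
          (lintegral_inter_add_diff _ _ hKmeas).symm
      _ = (∫⁻ x in K, ENNReal.ofReal (f ((hfun x).toReal)))
          + ∫⁻ x in Ω \ K, ENNReal.ofReal (f ((hfun x).toReal)) := by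
          rw [inter_eq_self_of_subset_right hKΩ]
      _ ≤ ENNReal.ofReal (f (ε * C)) * volume K
          + ∫⁻ x in Ω, ENNReal.ofReal (f (u x)) := add_le_add hbound_K hbound_diff
      _ ≤ ε' * (c₀ / 4) + ∫⁻ x in Ω, ENNReal.ofReal (f (u x)) := add_le_add hsmall le_rfl
      _ = (∫⁻ x in Ω, ENNReal.ofReal (f (u x))) + ε' * (c₀ / 4) := add_comm _ _
  -- final contradiction
  have hcKfin : ε' * cK ≠ ⊤ := by
    refine ENNReal.mul_ne_top hε'fin ?_
    have hle2 : cK ≤ ∫⁻ z, ENNReal.ofReal (‖z.1 - z.2‖ ^ p) ∂γ := by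
      rw [hcostγ]; exact le_add_self
    exact (lt_of_le_of_lt hle2 (lt_of_lt_of_le hγcost le_top)).ne
  have hchain : Tcost p μ ν + Ffun f Ω μ + ε' * c₀
      ≤ Tcost p μ ν + Ffun f Ω μ + (ε' * (c₀ / 4) + ε' * (c₀ / 4)) := by
    calc Tcost p μ ν + Ffun f Ω μ + ε' * c₀
        ≤ (Tcost p μ' ν + Ffun f Ω μ') + ε' * c₀ :=
          add_le_add (hmin μ' hμ'P) le_rfl
      _ ≤ (Tcost p μ' ν + Ffun f Ω μ') + ε' * cK :=
          add_le_add le_rfl (mul_le_mul_right hcK_lb _)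
      _ = (Tcost p μ' ν + ε' * cK) + Ffun f Ω μ' := by ring
      _ ≤ (∫⁻ z, ENNReal.ofReal (‖z.1 - z.2‖ ^ p) ∂γ' + ε' * cK) + Ffun f Ω μ' :=
          add_le_add (add_le_add hTμ'le le_rfl) le_rfl
      _ = ∫⁻ z, ENNReal.ofReal (‖z.1 - z.2‖ ^ p) ∂γ + Ffun f Ω μ' := by rw [hcostγ']
      _ ≤ (Tcost p μ ν + δ) + Ffun f Ω μ' := add_le_add hγcost.le le_rfl
      _ ≤ (Tcost p μ ν + δ) + (Ffun f Ω μ + ε' * (c₀ / 4)) := add_le_add le_rfl hFμ'_le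
      _ = Tcost p μ ν + Ffun f Ω μ + (ε' * (c₀ / 4) + ε' * (c₀ / 4)) := by
          rw [hδdef]; ring
  have hcancel : ε' * c₀ ≤ ε' * (c₀ / 4) + ε' * (c₀ / 4) := by
    have hfin : Tcost p μ ν + Ffun f Ω μ ≠ ⊤ := by
      rw [FFnu] at hFFμ_fin
      exact hFFμ_fin.ne
    exact (ENNReal.add_le_add_iff_left hfin).1 hchain
  have hc₀half : ε' * (c₀ / 4) + ε' * (c₀ / 4) = ε' * (c₀ / 2) := by
    rw [← mul_add, ENNReal.div_add_div_same, ← two_mul,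
      show (4:ℝ≥0∞) = 2 * 2 by norm_num, ENNReal.mul_div_mul_left _ _ (by norm_num) (by norm_num)]
  rw [hc₀half] at hcancel
  have hc₀le : c₀ ≤ c₀ / 2 := (ENNReal.mul_le_mul_iff_right hε'pos hε'fin).1 hcancel
  have : c₀ / 2 < c₀ := ENNReal.half_lt_self hc₀pos.ne' hc₀fin
  exact absurd (lt_of_le_of_lt hc₀le this) (lt_irrefl _)
end

section
/- Let Ω ⊂ ℝ^n be a bounded domain with diameter D and p ≥ 1. Suppose (μ,ν) is an optimal pair for the minimization of 𝔉^p over pairs of probability measures on Ω, with 𝔉^p(μ,ν) < +∞, and suppose the function g is locally Lipschitz on (0,1]. Then ν has finitely many atoms, i.e. ν = ∑_{i=1}^m a_i δ_{x_i} for some finite m, positive masses a_i, and points x_i ∈ Ω. -/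
open MeasureTheory Set Filter Topology Metric
open scoped ENNReal NNReal

section Aux
open MeasureTheory Set Filter Topology Metric
open scoped ENNReal NNReal Classical
noncomputable section

namespace S11

lemma rep_apply {n : ℕ} (a : ℕ → ℝ) (x : ℕ → Rn n) {s : Set (Rn n)} (hs : MeasurableSet s) :
    (Measure.sum fun i => ENNReal.ofReal (a i) • Measure.dirac (x i)) s
      = ∑' i, if x i ∈ s then ENNReal.ofReal (a i) else 0 := by
  rw [Measure.sum_apply _ hs]
  congr 1; ext i
  rw [Measure.smul_apply, Measure.dirac_apply' _ hs, smul_eq_mul]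
  by_cases h : x i ∈ s <;> simp [h]

lemma rep_singleton {n : ℕ} (a : ℕ → ℝ) (x : ℕ → Rn n) (y : Rn n) :
    (Measure.sum fun i => ENNReal.ofReal (a i) • Measure.dirac (x i)) {y}
      = ∑' i, if x i = y then ENNReal.ofReal (a i) else 0 := by
  rw [rep_apply a x (measurableSet_singleton y)]; simp

lemma rep_univ {n : ℕ} (a : ℕ → ℝ) (x : ℕ → Rn n) :
    (Measure.sum fun i => ENNReal.ofReal (a i) • Measure.dirac (x i)) univ
      = ∑' i, ENNReal.ofReal (a i) := by
  rw [rep_apply a x MeasurableSet.univ]; simp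

/-- value of the measure at an atom of the representation -/
lemma atom_value {n : ℕ} {a : ℕ → ℝ} {x : ℕ → Rn n}
    (hdist : ∀ i j, a i ≠ 0 → a j ≠ 0 → x i = x j → i = j) {k : ℕ} (hk : a k ≠ 0) :
    (Measure.sum fun i => ENNReal.ofReal (a i) • Measure.dirac (x i)) {x k}
      = ENNReal.ofReal (a k) := by
  rw [rep_singleton]
  rw [tsum_eq_single k ?_]
  · simp
  · intro j hj
    by_cases hxy : x j = x k
    · by_cases haj : a j = 0
      · simp [haj]
      · exact absurd (hdist j k haj hk hxy) hj
    · simp [hxy]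

/-- every point with positive mass appears in the representation -/
lemma atom_exists {n : ℕ} {a : ℕ → ℝ} {x : ℕ → Rn n} {y : Rn n}
    (hy : (Measure.sum fun i => ENNReal.ofReal (a i) • Measure.dirac (x i)) {y} ≠ 0) :
    ∃ k, a k ≠ 0 ∧ x k = y := by
  rw [rep_singleton] at hy
  rw [ne_eq, ENNReal.tsum_eq_zero] at hy
  push_neg at hy
  obtain ⟨k, hk⟩ := hy
  by_cases hxy : x k = y
  · refine ⟨k, fun h0 => hk ?_, hxy⟩
    simp [hxy, h0]
  · exact absurd (by simp [hxy]) hk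

end S11

namespace S11

lemma tsum_two (F : ℕ → ℝ≥0∞) {ks kb : ℕ} (hne : ks ≠ kb) :
    ∑' i, F i = F ks + F kb + ∑' i, if i = ks ∨ i = kb then 0 else F i := by
  rw [ENNReal.tsum_eq_add_tsum_ite ks, ENNReal.tsum_eq_add_tsum_ite kb,
    if_neg (Ne.symm hne), ← add_assoc]
  congr 1
  exact tsum_congr fun i => by
    by_cases h1 : i = ks <;> by_cases h2 : i = kb <;> simp [h1, h2]

lemma cost_measurable {n : ℕ} {p : ℝ} (hp : 0 ≤ p) :
    Measurable fun z : Rn n × Rn n => ENNReal.ofReal (‖z.1 - z.2‖ ^ p) :=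
  (ENNReal.continuous_ofReal.comp ((Real.continuous_rpow_const hp).comp
    ((continuous_fst.sub continuous_snd).norm))).measurable

end S11

namespace S11

lemma Tmap_measurable {n : ℕ} (ys yb : Rn n) :
    Measurable fun y : Rn n => if y = ys then yb else y :=
  Measurable.ite (measurableSet_singleton ys) measurable_const measurable_id

/-- moving the mass of atom `ks` onto atom `kb` -/
lemma rep_map {n : ℕ} {a : ℕ → ℝ} {x : ℕ → Rn n}
    (hnn : ∀ i, 0 ≤ a i)
    (hdist : ∀ i j, a i ≠ 0 → a j ≠ 0 → x i = x j → i = j)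
    {ks kb : ℕ} (hks : a ks ≠ 0) (hkb : a kb ≠ 0) (hne : ks ≠ kb) :
    (Measure.sum fun i => ENNReal.ofReal (a i) • Measure.dirac (x i)).map
        (fun y => if y = x ks then x kb else y)
      = Measure.sum fun i =>
          ENNReal.ofReal ((fun j => if j = ks then 0 else if j = kb then a kb + a ks else a j) i)
            • Measure.dirac (x i) := by
  have hxne : x ks ≠ x kb := fun h => hne (hdist ks kb hks hkb h)
  ext s hs
  rw [Measure.map_apply (Tmap_measurable (x ks) (x kb)) hs, rep_apply _ _ (hs.preimage (Tmap_measurable _ _)),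
    rep_apply _ _ hs]
  have hL : ∀ i, (if x i ∈ (fun y => if y = x ks then x kb else y) ⁻¹' s then ENNReal.ofReal (a i) else 0)
      = (if (if x i = x ks then x kb else x i) ∈ s then ENNReal.ofReal (a i) else 0) := fun i => rfl
  simp only [hL]
  rw [tsum_two _ hne, tsum_two (fun i => if x i ∈ s then ENNReal.ofReal
    ((fun j => if j = ks then 0 else if j = kb then a kb + a ks else a j) i) else 0) hne]
  have e1 : (if (if x ks = x ks then x kb else x ks) ∈ s then ENNReal.ofReal (a ks) else 0)
      = if x kb ∈ s then ENNReal.ofReal (a ks) else 0 := by simp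
  have e2 : (if (if x kb = x ks then x kb else x kb) ∈ s then ENNReal.ofReal (a kb) else 0)
      = if x kb ∈ s then ENNReal.ofReal (a kb) else 0 := by simp [hxne.symm]
  rw [e1, e2]
  congr 1
  · -- edge terms
    by_cases hb : x kb ∈ s <;> by_cases hsks : x ks ∈ s <;>
      simp [hb, hsks, hne, Ne.symm hne, ENNReal.ofReal_add (hnn ks) (hnn kb), ENNReal.ofReal_add (hnn kb) (hnn ks), add_comm]
  · -- remaining terms
    refine tsum_congr fun i => ?_
    by_cases hi : i = ks ∨ i = kb
    · simp [hi]
    · rw [if_neg hi, if_neg hi]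
      push_neg at hi
      by_cases hai : a i = 0
      · simp [hai, hi.1, hi.2]
      · have hx : x i ≠ x ks := fun h => hi.1 (hdist i ks hai hks h)
        simp [hx, hi.1, hi.2]

end S11

namespace S11

lemma cost_map_le {n : ℕ} {p : ℝ} (hp : 0 ≤ p) (γ : Measure (Rn n × Rn n))
    {Ωm : Set (Rn n)} (hΩm : MeasurableSet Ωm)
    (hfst : γ (Prod.fst ⁻¹' Ωmᶜ) = 0) {ys yb : Rn n} {Cr : ℝ}
    (hC : ∀ x ∈ Ωm, ‖x - yb‖ ^ p ≤ Cr) :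
    ∫⁻ z, ENNReal.ofReal (‖z.1 - z.2‖ ^ p)
        ∂(γ.map (fun z : Rn n × Rn n => (z.1, if z.2 = ys then yb else z.2)))
      ≤ (∫⁻ z, ENNReal.ofReal (‖z.1 - z.2‖ ^ p) ∂γ)
        + ENNReal.ofReal Cr * γ (Prod.snd ⁻¹' {ys}) := by
  have hT := Tmap_measurable (n := n) ys yb
  have hΦ : Measurable fun z : Rn n × Rn n => (z.1, if z.2 = ys then yb else z.2) :=
    measurable_fst.prodMk (hT.comp measurable_snd)
  rw [lintegral_map (cost_measurable hp) hΦ]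
  have hsm : MeasurableSet (Prod.snd ⁻¹' ({ys} : Set (Rn n)) : Set (Rn n × Rn n)) :=
    (measurableSet_singleton ys).preimage measurable_snd
  have hae : ∀ᵐ z ∂γ, z.1 ∈ Ωm := by
    rw [ae_iff]
    exact hfst
  have hstep : ∫⁻ z, ENNReal.ofReal (‖z.1 - (if z.2 = ys then yb else z.2)‖ ^ p) ∂γ
      ≤ ∫⁻ z, (ENNReal.ofReal (‖z.1 - z.2‖ ^ p)
          + (Prod.snd ⁻¹' ({ys} : Set (Rn n))).indicator (fun _ => ENNReal.ofReal Cr) z) ∂γ := by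
    refine lintegral_mono_ae ?_
    filter_upwards [hae] with z hz
    by_cases h2 : z.2 = ys
    · have : (Prod.snd ⁻¹' ({ys} : Set (Rn n))).indicator
          (fun _ => ENNReal.ofReal Cr) z = ENNReal.ofReal Cr := by
        apply Set.indicator_of_mem
        simp [h2]
      rw [if_pos h2, this]
      exact le_add_left (ENNReal.ofReal_le_ofReal (hC z.1 hz))
    · rw [if_neg h2]
      exact self_le_add_right _ _
  refine hstep.trans ?_
  rw [lintegral_add_right _ (measurable_const.indicator hsm), lintegral_indicator hsm]
  simp [Measure.restrict_apply MeasurableSet.univ, Set.univ_inter]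

lemma rep_finite {n : ℕ} (a : ℕ → ℝ) (x : ℕ → Rn n) (s : Finset ℕ)
    (hz : ∀ i ∉ s, ENNReal.ofReal (a i) = 0) :
    (Measure.sum fun i => ENNReal.ofReal (a i) • Measure.dirac (x i))
      = ∑ i ∈ s, ENNReal.ofReal (a i) • Measure.dirac (x i) := by
  ext t ht
  rw [Measure.sum_apply _ ht, Measure.finset_sum_apply]
  exact tsum_eq_sum (fun i hi => by rw [hz i hi]; simp)

end S11

end
end Aux

set_option maxHeartbeats 1000000 in
/-- if `g` is locally Lipschitz on `(0,1]`, an optimal `ν` has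
finitely many atoms. -/
theorem statement_11 {n : ℕ} (Ω : Set (Rn n)) (hΩ : IsBoundedDomain Ω)
    (p : ℝ) (hp : 1 ≤ p) (f f' g : ℝ → ℝ)
    (hf_nonneg : ∀ t : ℝ, 0 ≤ t → 0 ≤ f t) (hf0 : f 0 = 0)
    (hf_sconv : StrictConvexOn ℝ (Ici 0) f)
    (hf_deriv : ∀ t ∈ Ici (0:ℝ), HasDerivWithinAt f (f' t) (Ici 0) t)
    (hf'_cont : ContinuousOn f' (Ici 0)) (hf'0 : f' 0 = 0)
    (hf_super : Tendsto (fun t => f t / t) atTop atTop)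
    (hg0 : g 0 = 0) (hg_nonneg : ∀ t ∈ Icc (0:ℝ) 1, 0 ≤ g t)
    (hg_lsc : LowerSemicontinuousOn g (Icc 0 1))
    (hg_sub : ∀ s t : ℝ, 0 ≤ s → 0 ≤ t → s + t ≤ 1 → g (s + t) ≤ g s + g t)
    (hg_inf : Tendsto (fun t => g t / t) (𝓝[>] (0:ℝ)) atTop)
    (hg_lip : ∀ t ∈ Ioc (0:ℝ) 1, ∃ ε > (0:ℝ), ∃ L : ℝ≥0,
      LipschitzOnWith L g (Ioc (0:ℝ) 1 ∩ Metric.ball t ε))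
    (μ ν : Measure (Rn n)) (hμP : ProbOn Ω μ) (hνP : ProbOn Ω ν)
    (hopt : ∀ μ' ν' : Measure (Rn n), ProbOn Ω μ' → ProbOn Ω ν' →
      FFp p f g Ω μ ν ≤ FFp p f g Ω μ' ν')
    (hfin : FFp p f g Ω μ ν < ⊤) :
    ∃ (m : ℕ) (a : Fin m → ℝ) (x : Fin m → Rn n),
      (∀ i, 0 < a i) ∧ (∀ i, x i ∈ Ω) ∧
      ν = ∑ i : Fin m, ENNReal.ofReal (a i) • Measure.dirac (x i) := by
  classical
  obtain ⟨U, hUopen, hUne, hUconn, hUbd, hΩeq, hfr⟩ := hΩ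
  have hΩclosed : IsClosed Ω := by rw [hΩeq]; exact isClosed_closure
  have hΩmeas : MeasurableSet Ω := hΩclosed.measurableSet
  have hp0 : (0:ℝ) ≤ p := le_trans zero_le_one hp
  haveI hνprob := hνP.1
  have hνuniv : ν univ = 1 := measure_univ
  have hTfin : Tcost p μ ν ≠ ⊤ := by
    intro h; rw [FFp] at hfin; simp [h] at hfin
  have hGfin : Gfun g ν ≠ ⊤ := by
    intro h; rw [FFp] at hfin; simp [h] at hfin
  -- extract a representation of ν
  have hNE : Nonempty {q : (ℕ → ℝ) × (ℕ → Rn n) //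
      (∀ i, 0 ≤ q.1 i) ∧
      (∀ i j, q.1 i ≠ 0 → q.1 j ≠ 0 → q.2 i = q.2 j → i = j) ∧
      ν = Measure.sum fun i => ENNReal.ofReal (q.1 i) • Measure.dirac (q.2 i)} := by
    by_contra h
    rw [not_nonempty_iff] at h
    exact hGfin (by unfold Gfun; exact iInf_of_empty _)
  obtain ⟨⟨⟨a₀, x₀⟩, h₀nn, h₀dist, h₀eq⟩⟩ := hNE
  have htot₀ : ∑' i, ENNReal.ofReal (a₀ i) = 1 := by
    rw [← S11.rep_univ a₀ x₀, ← h₀eq, hνuniv]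
  have hmem₀ : ∀ k, a₀ k ≠ 0 → x₀ k ∈ Ω := by
    intro k hk
    by_contra hx
    have h1 : ν {x₀ k} = ENNReal.ofReal (a₀ k) := by
      rw [h₀eq]; exact S11.atom_value h₀dist hk
    have h2 : ν {x₀ k} = 0 :=
      measure_mono_null (by simpa [Set.singleton_subset_iff] using hx) hνP.2
    rw [h2] at h1
    exact hk (le_antisymm (ENNReal.ofReal_eq_zero.mp h1.symm) (h₀nn k))
  by_cases hfinsupp : {i | a₀ i ≠ 0}.Finite
  · -- FINITE CASE: build the finite representation
    set s : Finset ℕ := hfinsupp.toFinset with hs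
    have hmem : ∀ i : Fin s.card, a₀ ((s.equivFin.symm i) : ℕ) ≠ 0 := by
      intro i
      exact hfinsupp.mem_toFinset.mp (s.equivFin.symm i).2
    refine ⟨s.card, fun i => a₀ ((s.equivFin.symm i) : ℕ),
      fun i => x₀ ((s.equivFin.symm i) : ℕ), ?_, ?_, ?_⟩
    · exact fun i => lt_of_le_of_ne (h₀nn _) (Ne.symm (hmem i))
    · exact fun i => hmem₀ _ (hmem i)
    · rw [h₀eq, S11.rep_finite a₀ x₀ s (fun i hi => ?_)]
      · rw [← Finset.sum_coe_sort s
          (fun i => ENNReal.ofReal (a₀ i) • Measure.dirac (x₀ i))]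
        exact (Equiv.sum_comp s.equivFin.symm
          (fun j : s => ENNReal.ofReal (a₀ (j : ℕ)) • Measure.dirac (x₀ (j : ℕ)))).symm
      · have hi' : a₀ i = 0 := by
          by_contra h
          exact hi (hfinsupp.mem_toFinset.mpr h)
        simp [hi']
  · -- INFINITE CASE: contradiction with optimality
    exfalso
    have hinf : {i | a₀ i ≠ 0}.Infinite := hfinsupp
    have hsum : Summable a₀ := by
      have h1 : Summable (fun i => (ENNReal.ofReal (a₀ i)).toReal) :=
        ENNReal.summable_toReal (by rw [htot₀]; exact ENNReal.one_ne_top)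
      exact h1.congr fun i => ENNReal.toReal_ofReal (h₀nn i)
    have hle1 : ∀ i, a₀ i ≤ 1 := by
      intro i
      have h1 := ENNReal.le_tsum (f := fun i => ENNReal.ofReal (a₀ i)) i
      rw [htot₀] at h1
      exact ENNReal.ofReal_le_one.mp h1
    -- the big atom
    obtain ⟨kb₀, hkb₀⟩ := hinf.nonempty
    have hkb₀ : a₀ kb₀ ≠ 0 := hkb₀
    set b := a₀ kb₀ with hbdef
    have hb0 : 0 < b := lt_of_le_of_ne (h₀nn _) (Ne.symm hkb₀)
    have hble : b ≤ 1 := hle1 kb₀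
    set yb := x₀ kb₀ with hybdef
    have hybΩ : yb ∈ Ω := hmem₀ _ hkb₀
    have hνyb : ν {yb} = ENNReal.ofReal b := by
      rw [h₀eq]; exact S11.atom_value h₀dist hkb₀
    obtain ⟨ε₀, hε₀, L, hLip⟩ := hg_lip b ⟨hb0, hble⟩
    -- bound on Ω
    obtain ⟨R, hR⟩ := (hUbd.closure).exists_norm_le
    rw [← hΩeq] at hR
    set R' := max R 0 with hR'def
    set Cr := (2 * R') ^ p with hCrdef
    have hCr0 : 0 ≤ Cr := Real.rpow_nonneg (by positivity) p
    have hCrb : ∀ x ∈ Ω, ‖x - yb‖ ^ p ≤ Cr := by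
      intro x hx
      refine Real.rpow_le_rpow (norm_nonneg _) ?_ hp0
      calc ‖x - yb‖ ≤ ‖x‖ + ‖yb‖ := norm_sub_le _ _
        _ ≤ R' + R' := add_le_add ((hR x hx).trans (le_max_left _ _))
            ((hR yb hybΩ).trans (le_max_left _ _))
        _ = 2 * R' := by ring
    set K := Cr + (L:ℝ) + 1 with hKdef
    -- small-mass lower bound on g
    have hev : ∀ᶠ t in 𝓝[>] (0:ℝ), K ≤ g t / t := hg_inf.eventually (eventually_ge_atTop K)
    rw [eventually_nhdsWithin_iff, Metric.eventually_nhds_iff] at hev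
    obtain ⟨δ₁, hδ₁pos, hδ₁⟩ := hev
    set δ := min δ₁ ε₀ with hδdef
    have hδpos : 0 < δ := lt_min hδ₁pos hε₀
    -- pick a small atom
    have hcof : ((fun i => a₀ i) ⁻¹' (Iio δ))ᶜ.Finite :=
      Filter.mem_cofinite.mp (hsum.tendsto_cofinite_zero (Iio_mem_nhds hδpos))
    obtain ⟨i₀, hi₀⟩ := (hinf.diff (hcof.union (Set.finite_singleton kb₀))).nonempty
    have hi₀ne : a₀ i₀ ≠ 0 := hi₀.1
    have hi₀2 := hi₀.2
    simp only [Set.mem_union, Set.mem_compl_iff, Set.mem_preimage, Set.mem_Iio,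
      Set.mem_singleton_iff, not_or, not_not] at hi₀2
    have hi₀small : a₀ i₀ < δ := hi₀2.1
    have hi₀kb : i₀ ≠ kb₀ := hi₀2.2
    set m₀ := a₀ i₀ with hm₀def
    have hm₀pos : 0 < m₀ := lt_of_le_of_ne (h₀nn _) (Ne.symm hi₀ne)
    set ys := x₀ i₀ with hysdef
    have hysΩ : ys ∈ Ω := hmem₀ _ hi₀ne
    have hνys : ν {ys} = ENNReal.ofReal m₀ := by
      rw [h₀eq]; exact S11.atom_value h₀dist hi₀ne
    have hysyb : ys ≠ yb := fun h => hi₀kb (h₀dist i₀ kb₀ hi₀ne hkb₀ h)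
    have hgm₀ : K * m₀ ≤ g m₀ := by
      have h1 : dist m₀ 0 < δ₁ := by
        rw [Real.dist_eq, sub_zero, abs_of_pos hm₀pos]
        exact hi₀small.trans_le (min_le_left _ _)
      have h2 := hδ₁ h1 (Set.mem_Ioi.mpr hm₀pos)
      exact (le_div_iff₀ hm₀pos).mp h2
    have hm₀ε₀ : m₀ < ε₀ := hi₀small.trans_le (min_le_right _ _)
    have hbm₀le1 : b + m₀ ≤ 1 := by
      have h1 : ENNReal.ofReal b + ENNReal.ofReal m₀ ≤ ∑' i, ENNReal.ofReal (a₀ i) := by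
        have h2 := Summable.sum_le_tsum (f := fun i => ENNReal.ofReal (a₀ i)) ({kb₀, i₀} : Finset ℕ)
          (fun i _ => zero_le) ENNReal.summable
        rwa [Finset.sum_pair (Ne.symm hi₀kb)] at h2
      rw [htot₀, ← ENNReal.ofReal_add hb0.le hm₀pos.le] at h1
      exact ENNReal.ofReal_le_one.mp h1
    have hgb : g (b + m₀) ≤ g b + L * m₀ := by
      have h1 : b ∈ Ioc (0:ℝ) 1 ∩ Metric.ball b ε₀ := ⟨⟨hb0, hble⟩, Metric.mem_ball_self hε₀⟩
      have h2 : b + m₀ ∈ Ioc (0:ℝ) 1 ∩ Metric.ball b ε₀ := by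
        refine ⟨⟨by linarith, hbm₀le1⟩, ?_⟩
        rw [Metric.mem_ball, Real.dist_eq, add_sub_cancel_left, abs_of_pos hm₀pos]
        exact hm₀ε₀
      have h3 := hLip.dist_le_mul _ h2 _ h1
      rw [Real.dist_eq, Real.dist_eq, add_sub_cancel_left, abs_of_pos hm₀pos] at h3
      have h4 := le_trans (le_abs_self _) h3
      linarith
    -- near-optimal representation
    have hlt : Gfun g ν < Gfun g ν + ENNReal.ofReal (m₀/4) :=
      ENNReal.lt_add_right hGfin (by simp only [ne_eq, ENNReal.ofReal_eq_zero, not_le]; linarith)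
    have hlt2 : (⨅ r : {q : (ℕ → ℝ) × (ℕ → Rn n) //
        (∀ i, 0 ≤ q.1 i) ∧
        (∀ i j, q.1 i ≠ 0 → q.1 j ≠ 0 → q.2 i = q.2 j → i = j) ∧
        ν = Measure.sum fun i => ENNReal.ofReal (q.1 i) • Measure.dirac (q.2 i)},
        ∑' i, ENNReal.ofReal (g (r.1.1 i))) < Gfun g ν + ENNReal.ofReal (m₀/4) := hlt
    obtain ⟨⟨⟨a, x⟩, hann, hadist, haeq⟩, hrlt⟩ := iInf_lt_iff.mp hlt2
    simp only at hrlt haeq hann hadist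
    -- locate the two atoms in this representation
    have hνys_ne : ν {ys} ≠ 0 := by
      rw [hνys]; simp only [ne_eq, ENNReal.ofReal_eq_zero, not_le]; linarith
    obtain ⟨ks, hks0, hksy⟩ := S11.atom_exists (a := a) (x := x) (y := ys)
      (by rw [← haeq]; exact hνys_ne)
    have haks : a ks = m₀ := by
      have h1 : ν {ys} = ENNReal.ofReal (a ks) := by
        rw [haeq, ← hksy]; exact S11.atom_value hadist hks0
      rw [hνys] at h1
      exact ((ENNReal.ofReal_eq_ofReal_iff (h₀nn i₀) (hann ks)).mp h1).symm
    have hνyb_ne : ν {yb} ≠ 0 := by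
      rw [hνyb]; simp only [ne_eq, ENNReal.ofReal_eq_zero, not_le]; linarith
    obtain ⟨kb, hkb0, hkby⟩ := S11.atom_exists (a := a) (x := x) (y := yb)
      (by rw [← haeq]; exact hνyb_ne)
    have hakb : a kb = b := by
      have h1 : ν {yb} = ENNReal.ofReal (a kb) := by
        rw [haeq, ← hkby]; exact S11.atom_value hadist hkb0
      rw [hνyb] at h1
      exact ((ENNReal.ofReal_eq_ofReal_iff (h₀nn kb₀) (hann kb)).mp h1).symm
    have hkskb : ks ≠ kb := fun h => hysyb (by rw [← hksy, ← hkby, h])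
    -- modified representation
    set a' : ℕ → ℝ := fun j => if j = ks then 0 else if j = kb then a kb + a ks else a j
      with ha'def
    set ν' : Measure (Rn n) := Measure.sum fun i => ENNReal.ofReal (a' i) • Measure.dirac (x i)
      with hν'def
    have ha'nn : ∀ i, 0 ≤ a' i := by
      intro i
      simp only [ha'def]
      split_ifs
      · exact le_refl 0
      · exact add_nonneg (hann kb) (hann ks)
      · exact hann i
    have ha'ne : ∀ i, a' i ≠ 0 → a i ≠ 0 := by
      intro i hi
      simp only [ha'def] at hi
      split_ifs at hi with h1 h2
      · exact absurd rfl hi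
      · rw [h2, hakb]; exact hb0.ne'
      · exact hi
    have ha'dist : ∀ i j, a' i ≠ 0 → a' j ≠ 0 → x i = x j → i = j :=
      fun i j hi hj => hadist i j (ha'ne i hi) (ha'ne j hj)
    have hmemr : ∀ k, a k ≠ 0 → x k ∈ Ω := by
      intro k hk
      by_contra hx
      have h1 : ν {x k} = ENNReal.ofReal (a k) := by
        rw [haeq]; exact S11.atom_value hadist hk
      have h2 : ν {x k} = 0 :=
        measure_mono_null (by simpa [Set.singleton_subset_iff] using hx) hνP.2
      rw [h2] at h1
      exact hk (le_antisymm (ENNReal.ofReal_eq_zero.mp h1.symm) (hann k))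
    have htotr : ∑' i, ENNReal.ofReal (a i) = 1 := by
      rw [← S11.rep_univ a x, ← haeq, hνuniv]
    have ha'ks : a' ks = 0 := by simp [ha'def]
    have ha'kb : a' kb = b + m₀ := by
      simp [ha'def, Ne.symm hkskb, hakb, haks]
    have hRporta : ∀ (F F' : ℕ → ℝ≥0∞), (∀ i, i ≠ ks → i ≠ kb → F i = F' i) →
        (∑' i, if i = ks ∨ i = kb then 0 else F i)
          = ∑' i, if i = ks ∨ i = kb then 0 else F' i := by
      intro F F' hFF
      refine tsum_congr fun i => ?_
      by_cases hi : i = ks ∨ i = kb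
      · simp [hi]
      · rw [if_neg hi, if_neg hi]
        push_neg at hi
        exact hFF i hi.1 hi.2
    have ha'eq : ∀ i, i ≠ ks → i ≠ kb → a' i = a i := by
      intro i h1 h2
      simp only [ha'def, if_neg h1, if_neg h2]
    have htot' : ∑' i, ENNReal.ofReal (a' i) = 1 := by
      rw [S11.tsum_two (fun i => ENNReal.ofReal (a' i)) hkskb,
        hRporta (fun i => ENNReal.ofReal (a' i)) (fun i => ENNReal.ofReal (a i))
          (fun i h1 h2 => by simp only [ha'eq i h1 h2])]
      rw [S11.tsum_two (fun i => ENNReal.ofReal (a i)) hkskb] at htotr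
      rw [ha'ks, ha'kb, ← hakb, ← haks, ENNReal.ofReal_add (hann kb) (hann ks),
        ENNReal.ofReal_zero, ← htotr]
      ring
    have hν'P : ProbOn Ω ν' := by
      constructor
      · exact ⟨by rw [hν'def, S11.rep_univ]; exact htot'⟩
      · rw [hν'def, S11.rep_apply a' x hΩmeas.compl]
        refine ENNReal.tsum_eq_zero.mpr fun i => ?_
        by_cases hx : x i ∈ Ωᶜ
        · rw [if_pos hx]
          by_cases h0 : a' i = 0
          · simp [h0]
          · exact absurd (hmemr i (ha'ne i h0)) hx
        · rw [if_neg hx]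
    -- near-optimal coupling
    have hltT : Tcost p μ ν < Tcost p μ ν + ENNReal.ofReal (m₀/4) :=
      ENNReal.lt_add_right hTfin (by simp only [ne_eq, ENNReal.ofReal_eq_zero, not_le]; linarith)
    have hltT2 : (⨅ γ ∈ Couplings μ ν, ∫⁻ z, ENNReal.ofReal (‖z.1 - z.2‖ ^ p) ∂γ)
        < Tcost p μ ν + ENNReal.ofReal (m₀/4) := hltT
    simp only [iInf_lt_iff] at hltT2
    obtain ⟨γ, hγC, hγlt⟩ := hltT2
    obtain ⟨hγprob, hγ1, hγ2⟩ := hγC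
    haveI := hγprob
    -- the transported coupling
    have hΦm : Measurable fun z : Rn n × Rn n => (z.1, if z.2 = x ks then x kb else z.2) :=
      measurable_fst.prodMk ((S11.Tmap_measurable (x ks) (x kb)).comp measurable_snd)
    have hkb0' : a kb ≠ 0 := by rw [hakb]; exact hb0.ne'
    have hγ'C : γ.map (fun z : Rn n × Rn n => (z.1, if z.2 = x ks then x kb else z.2))
        ∈ Couplings μ ν' := by
      refine ⟨Measure.isProbabilityMeasure_map hΦm.aemeasurable, ?_, ?_⟩
      · rw [Measure.map_map measurable_fst hΦm]
        have h1 : (Prod.fst ∘ fun z : Rn n × Rn n =>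
            (z.1, if z.2 = x ks then x kb else z.2)) = Prod.fst := rfl
        rw [h1, hγ1]
      · rw [Measure.map_map measurable_snd hΦm]
        have h1 : (Prod.snd ∘ fun z : Rn n × Rn n =>
            (z.1, if z.2 = x ks then x kb else z.2))
            = (fun y => if y = x ks then x kb else y) ∘ Prod.snd := rfl
        rw [h1, ← Measure.map_map (S11.Tmap_measurable (x ks) (x kb)) measurable_snd, hγ2, haeq]
        exact S11.rep_map hann hadist hks0 hkb0' hkskb
    -- cost bound
    have hμΩ : γ (Prod.fst ⁻¹' Ωᶜ) = 0 := by
      rw [← Measure.map_apply measurable_fst hΩmeas.compl, hγ1]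
      exact hμP.2
    have hνxks : γ (Prod.snd ⁻¹' {x ks}) = ENNReal.ofReal m₀ := by
      rw [← Measure.map_apply measurable_snd (measurableSet_singleton _), hγ2, hksy]
      exact hνys
    have hcost' : (∫⁻ z, ENNReal.ofReal (‖z.1 - z.2‖ ^ p)
          ∂(γ.map (fun z : Rn n × Rn n => (z.1, if z.2 = x ks then x kb else z.2))))
        ≤ (∫⁻ z, ENNReal.ofReal (‖z.1 - z.2‖ ^ p) ∂γ)
          + ENNReal.ofReal Cr * ENNReal.ofReal m₀ := by
      rw [← hνxks]
      exact S11.cost_map_le hp0 γ hΩmeas hμΩ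
        (fun z hz => by rw [hkby]; exact hCrb z hz)
    have hT' : Tcost p μ ν' ≤ Tcost p μ ν + ENNReal.ofReal (m₀/4)
        + ENNReal.ofReal Cr * ENNReal.ofReal m₀ := by
      have h0 : Tcost p μ ν' ≤ ∫⁻ z, ENNReal.ofReal (‖z.1 - z.2‖ ^ p)
          ∂(γ.map (fun z : Rn n × Rn n => (z.1, if z.2 = x ks then x kb else z.2))) :=
        iInf₂_le _ hγ'C
      exact h0.trans (hcost'.trans (add_le_add hγlt.le le_rfl))
    -- G bound
    have hG' : Gfun g ν' ≤ ∑' i, ENNReal.ofReal (g (a' i)) :=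
      by unfold Gfun; exact iInf_le _ (⟨⟨a', x⟩, ha'nn, ha'dist, hν'def⟩ : {q : (ℕ → ℝ) × (ℕ → Rn n) //
        (∀ i, 0 ≤ q.1 i) ∧
        (∀ i j, q.1 i ≠ 0 → q.1 j ≠ 0 → q.2 i = q.2 j → i = j) ∧
        ν' = Measure.sum fun i => ENNReal.ofReal (q.1 i) • Measure.dirac (q.2 i)})
    have hS1dec : (∑' i, ENNReal.ofReal (g (a' i)))
        = ENNReal.ofReal (g (b + m₀))
          + ∑' i, if i = ks ∨ i = kb then 0 else ENNReal.ofReal (g (a i)) := by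
      rw [S11.tsum_two (fun i => ENNReal.ofReal (g (a' i))) hkskb,
        hRporta (fun i => ENNReal.ofReal (g (a' i))) (fun i => ENNReal.ofReal (g (a i)))
          (fun i h1 h2 => by simp only [ha'eq i h1 h2])]
      rw [ha'ks, ha'kb, hg0, ENNReal.ofReal_zero, zero_add]
    have hS2dec : (∑' i, ENNReal.ofReal (g (a i)))
        = ENNReal.ofReal (g m₀) + ENNReal.ofReal (g b)
          + ∑' i, if i = ks ∨ i = kb then 0 else ENNReal.ofReal (g (a i)) := by
      rw [S11.tsum_two (fun i => ENNReal.ofReal (g (a i))) hkskb, haks, hakb]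
    have hgb0 : 0 ≤ g b := hg_nonneg b ⟨hb0.le, hble⟩
    have hKexp : K * m₀ = Cr * m₀ + (L:ℝ) * m₀ + m₀ := by rw [hKdef]; ring
    have hgm₀pos : 0 < g m₀ := by nlinarith [hgm₀, hm₀pos, hCr0, L.coe_nonneg]
    have hGc : Gfun g ν' + (ENNReal.ofReal (g b) + ENNReal.ofReal (g m₀))
        ≤ Gfun g ν + ENNReal.ofReal (m₀/4) + ENNReal.ofReal (g b + L * m₀) := by
      calc Gfun g ν' + (ENNReal.ofReal (g b) + ENNReal.ofReal (g m₀))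
          ≤ (∑' i, ENNReal.ofReal (g (a' i))) + (ENNReal.ofReal (g b) + ENNReal.ofReal (g m₀)) :=
            add_le_add hG' le_rfl
        _ = ENNReal.ofReal (g (b + m₀)) + (∑' i, ENNReal.ofReal (g (a i))) := by
            rw [hS1dec, hS2dec]; ring
        _ ≤ ENNReal.ofReal (g b + L * m₀) + (Gfun g ν + ENNReal.ofReal (m₀/4)) :=
            add_le_add (ENNReal.ofReal_le_ofReal hgb) hrlt.le
        _ = Gfun g ν + ENNReal.ofReal (m₀/4) + ENNReal.ofReal (g b + L * m₀) := by ring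
    -- the main comparison
    have hmain : FFp p f g Ω μ ν' + (ENNReal.ofReal (g b) + ENNReal.ofReal (g m₀))
        < FFp p f g Ω μ ν + (ENNReal.ofReal (g b) + ENNReal.ofReal (g m₀)) := by
      have h1 : FFp p f g Ω μ ν' + (ENNReal.ofReal (g b) + ENNReal.ofReal (g m₀))
          ≤ FFp p f g Ω μ ν + (ENNReal.ofReal (m₀/4) + ENNReal.ofReal Cr * ENNReal.ofReal m₀
            + ENNReal.ofReal (m₀/4) + ENNReal.ofReal (g b + L * m₀)) := by
        calc FFp p f g Ω μ ν' + (ENNReal.ofReal (g b) + ENNReal.ofReal (g m₀))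
            = Tcost p μ ν' + Ffun f Ω μ
              + (Gfun g ν' + (ENNReal.ofReal (g b) + ENNReal.ofReal (g m₀))) := by
              rw [FFp]; ring
          _ ≤ (Tcost p μ ν + ENNReal.ofReal (m₀/4) + ENNReal.ofReal Cr * ENNReal.ofReal m₀)
              + Ffun f Ω μ
              + (Gfun g ν + ENNReal.ofReal (m₀/4) + ENNReal.ofReal (g b + L * m₀)) :=
              add_le_add (add_le_add hT' le_rfl) hGc
          _ = _ := by rw [FFp]; ring
      refine lt_of_le_of_lt h1 ?_
      have hXY : ENNReal.ofReal (m₀/4) + ENNReal.ofReal Cr * ENNReal.ofReal m₀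
          + ENNReal.ofReal (m₀/4) + ENNReal.ofReal (g b + L * m₀)
          = ENNReal.ofReal (m₀/4 + Cr * m₀ + m₀/4 + (g b + L * m₀)) := by
        rw [← ENNReal.ofReal_mul hCr0,
          ← ENNReal.ofReal_add (by positivity) (mul_nonneg hCr0 hm₀pos.le),
          ← ENNReal.ofReal_add (by positivity) (by positivity),
          ← ENNReal.ofReal_add (by positivity) (by positivity)]
      rw [hXY, ← ENNReal.ofReal_add hgb0 hgm₀pos.le]
      refine ENNReal.add_lt_add_left hfin.ne ?_
      rw [ENNReal.ofReal_lt_ofReal_iff (add_pos_of_nonneg_of_pos hgb0 hgm₀pos)]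
      linarith [hgm₀, hKexp, hm₀pos]
    have hge := hopt μ ν' hμP hν'P
    exact lt_irrefl _ (lt_of_le_of_lt
      (add_le_add hge (le_refl (ENNReal.ofReal (g b) + ENNReal.ofReal (g m₀)))) hmain)
end

section
/- Let p ≥ 1, and let f(t) = a t^q with a > 0, q > 1, and g(t) = b t^r with b > 0, 0 < r < 1 (so k(t) = (f')^{-1}(t) = (t/(aq))^{1/(q−1)}). Then lim_{R→0+} g''( ∫_0^R k(R^p − r^p) n ω_n r^{n−1} dr ) · ∫_0^R k'(R^p − r^p) n ω_n r^{n−1} dr = −∞, where ω_n is the volume of the unit ball in ℝ^n; in particular the limsup as R → 0+ of this quantity is < −1. -/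
open MeasureTheory Set Filter Topology Metric
open scoped ENNReal NNReal

private lemma key_le (p α m : ℝ) (hp : 1 ≤ p) (hm : 0 ≤ m) {σ : ℝ}
    (h0 : 0 < σ) (h1 : σ ≤ 1) :
    (1 - σ ^ p) ^ α * σ ^ m ≤ (1 - σ) ^ (min α 0) := by
  have hp0 : 0 < p := lt_of_lt_of_le one_pos hp
  have hsp1 : σ ^ p ≤ 1 := Real.rpow_le_one h0.le h1 hp0.le
  have hsps : σ ^ p ≤ σ := by
    have := Real.rpow_le_rpow_of_exponent_ge h0 h1 hp
    rwa [Real.rpow_one] at this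
  have hu0 : (0:ℝ) ≤ 1 - σ ^ p := by linarith
  have hmain : (1 - σ ^ p) ^ α ≤ (1 - σ) ^ (min α 0) := by
    rcases le_or_gt 0 α with hα | hα
    · rw [min_eq_right hα, Real.rpow_zero]
      have : 0 ≤ σ ^ p := Real.rpow_nonneg h0.le p
      exact Real.rpow_le_one hu0 (by linarith) hα
    · rw [min_eq_left hα.le]
      rcases eq_or_lt_of_le h1 with he | hlt
      · subst he
        simp [Real.one_rpow]
      · exact Real.rpow_le_rpow_of_nonpos (by linarith) (by linarith) hα.le
  calc (1 - σ ^ p) ^ α * σ ^ m ≤ (1 - σ ^ p) ^ α * 1 := by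
        exact mul_le_mul_of_nonneg_left (Real.rpow_le_one h0.le h1 hm)
          (Real.rpow_nonneg hu0 α)
    _ = (1 - σ ^ p) ^ α := mul_one _
    _ ≤ (1 - σ) ^ (min α 0) := hmain

private lemma aux_integrable (p α m : ℝ) (hp : 1 ≤ p) (hα : -1 < α) (hm : 0 ≤ m) :
    IntervalIntegrable (fun σ : ℝ => (1 - σ ^ p) ^ α * σ ^ m) volume 0 1 := by
  have hβ : (-1:ℝ) < min α 0 := lt_min hα (by norm_num)
  have hg0 : IntervalIntegrable (fun x : ℝ => x ^ (min α 0)) volume 0 1 :=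
    intervalIntegral.intervalIntegrable_rpow' hβ
  have hg : IntervalIntegrable (fun x : ℝ => (1 - x) ^ (min α 0)) volume 0 1 := by
    have := (hg0.comp_sub_left 1)
    simpa using this.symm
  apply hg.mono_fun
  · apply Measurable.aestronglyMeasurable
    fun_prop
  · filter_upwards [ae_restrict_mem measurableSet_uIoc] with σ hσ
    rw [Set.uIoc_of_le zero_le_one] at hσ
    have h0 := hσ.1
    have h1 := hσ.2
    have hp0 : 0 < p := lt_of_lt_of_le one_pos hp
    have hsp1 : σ ^ p ≤ 1 := Real.rpow_le_one h0.le h1 hp0.le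
    have hu0 : (0:ℝ) ≤ 1 - σ ^ p := by linarith
    rw [Real.norm_eq_abs, Real.norm_eq_abs,
      abs_of_nonneg (mul_nonneg (Real.rpow_nonneg hu0 α) (Real.rpow_nonneg h0.le m)),
      abs_of_nonneg (Real.rpow_nonneg (by linarith : (0:ℝ) ≤ 1 - σ) _)]
    exact key_le p α m hp hm h0 h1

private lemma aux_pos (p α m : ℝ) (hp : 1 ≤ p) (hα : -1 < α) (hm : 0 ≤ m) :
    0 < ∫ σ in (0:ℝ)..1, (1 - σ ^ p) ^ α * σ ^ m := by
  apply intervalIntegral.intervalIntegral_pos_of_pos_on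
    (aux_integrable p α m hp hα hm) _ one_pos
  intro σ hσ
  have hp0 : 0 < p := lt_of_lt_of_le one_pos hp
  have h : σ ^ p < 1 := Real.rpow_lt_one hσ.1.le hσ.2 hp0
  exact mul_pos (Real.rpow_pos_of_pos (by linarith) α) (Real.rpow_pos_of_pos hσ.1 m)

private lemma aux_scale (p α m : ℝ) (hp : 1 ≤ p) (hm : 0 ≤ m) {R : ℝ} (hR : 0 < R) :
    (∫ s in (0:ℝ)..R, (R ^ p - s ^ p) ^ α * s ^ m)
      = R ^ (m + 1 + p * α) * ∫ σ in (0:ℝ)..1, (1 - σ ^ p) ^ α * σ ^ m := by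
  have hp0 : 0 < p := lt_of_lt_of_le one_pos hp
  have h := intervalIntegral.integral_comp_mul_left
    (fun s : ℝ => (R ^ p - s ^ p) ^ α * s ^ m) (a := 0) (b := 1) (c := R) hR.ne'
  simp only [mul_zero, mul_one, smul_eq_mul] at h
  have h2 : (∫ s in (0:ℝ)..R, (R ^ p - s ^ p) ^ α * s ^ m)
      = R * ∫ σ in (0:ℝ)..1, (R ^ p - (R * σ) ^ p) ^ α * (R * σ) ^ m := by
    rw [h]; field_simp
  rw [h2]
  have h3 : (∫ σ in (0:ℝ)..1, (R ^ p - (R * σ) ^ p) ^ α * (R * σ) ^ m)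
      = ∫ σ in (0:ℝ)..1, (R ^ (p * α) * R ^ m) * ((1 - σ ^ p) ^ α * σ ^ m) := by
    apply intervalIntegral.integral_congr
    intro σ hσ
    rw [Set.uIcc_of_le zero_le_one] at hσ
    have h0 := hσ.1
    have h1 := hσ.2
    have hsp1 : σ ^ p ≤ 1 := Real.rpow_le_one h0 h1 hp0.le
    have h4 : (R * σ) ^ p = R ^ p * σ ^ p := Real.mul_rpow hR.le h0
    have h5 : (R * σ) ^ m = R ^ m * σ ^ m := Real.mul_rpow hR.le h0
    have h6 : R ^ p - R ^ p * σ ^ p = R ^ p * (1 - σ ^ p) := by ring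
    have h7 : (R ^ p * (1 - σ ^ p)) ^ α = (R ^ p) ^ α * (1 - σ ^ p) ^ α :=
      Real.mul_rpow (Real.rpow_nonneg hR.le p) (by linarith)
    have h8 : (R ^ p) ^ α = R ^ (p * α) := (Real.rpow_mul hR.le p α).symm
    simp only [h4, h5, h6, h7, h8]
    ring
  rw [h3, intervalIntegral.integral_const_mul]
  have h9 : R ^ (m + 1 + p * α) = R ^ (p * α) * R ^ m * R := by
    rw [Real.rpow_add hR, Real.rpow_add hR, Real.rpow_one]
    ring
  rw [h9]; ring


/-- for power functions `f(t) = a t^q`, `g(t) = b t^r`, the quantity in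
the assumption of the existence theorem tends to `−∞` as `R → 0⁺`; in particular its
limsup is `< −1`. -/
theorem statement_17 {n : ℕ} (hn : 0 < n) (p : ℝ) (hp : 1 ≤ p)
    (a b q r : ℝ) (ha : 0 < a) (hb : 0 < b) (hq : 1 < q) (hr0 : 0 < r) (hr1 : r < 1)
    (k k' g'' : ℝ → ℝ)
    (hk : ∀ t : ℝ, k t = (t / (a * q)) ^ (1 / (q - 1)))
    (hk' : ∀ t : ℝ, k' t = 1 / ((q - 1) * (a * q)) * (t / (a * q)) ^ (1 / (q - 1) - 1))
    (hg'' : ∀ t : ℝ, g'' t = b * r * (r - 1) * t ^ (r - 2)) :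
    Tendsto (fun R : ℝ =>
        g'' (∫ s in (0:ℝ)..R, k (R ^ p - s ^ p) *
              (n * (volume (Metric.ball (0 : Rn n) 1)).toReal * s ^ ((n:ℝ) - 1))) *
          ∫ s in (0:ℝ)..R, k' (R ^ p - s ^ p) *
              (n * (volume (Metric.ball (0 : Rn n) 1)).toReal * s ^ ((n:ℝ) - 1)))
      (𝓝[>] (0:ℝ)) atBot ∧
    ∃ c : ℝ, c < -1 ∧ ∀ᶠ R in 𝓝[>] (0:ℝ),
      g'' (∫ s in (0:ℝ)..R, k (R ^ p - s ^ p) *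
            (n * (volume (Metric.ball (0 : Rn n) 1)).toReal * s ^ ((n:ℝ) - 1))) *
        (∫ s in (0:ℝ)..R, k' (R ^ p - s ^ p) *
            (n * (volume (Metric.ball (0 : Rn n) 1)).toReal * s ^ ((n:ℝ) - 1))) ≤ c := by
  have H : Tendsto (fun R : ℝ =>
        g'' (∫ s in (0:ℝ)..R, k (R ^ p - s ^ p) *
              (n * (volume (Metric.ball (0 : Rn n) 1)).toReal * s ^ ((n:ℝ) - 1))) *
          ∫ s in (0:ℝ)..R, k' (R ^ p - s ^ p) *
              (n * (volume (Metric.ball (0 : Rn n) 1)).toReal * s ^ ((n:ℝ) - 1)))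
      (𝓝[>] (0:ℝ)) atBot := by
    have hq1 : (0:ℝ) < q - 1 := by linarith
    have haq : (0:ℝ) < a * q := mul_pos ha (by linarith)
    have hn1 : (1:ℝ) ≤ (n:ℝ) := by exact_mod_cast hn
    have hm : (0:ℝ) ≤ (n:ℝ) - 1 := by linarith
    simp only [hk, hk', hg'']
    set ω : ℝ := (volume (Metric.ball (0 : Rn n) 1)).toReal with hωdef
    have hω : 0 < ω := by
      rw [hωdef]
      exact ENNReal.toReal_pos
        (Metric.measure_ball_pos volume 0 one_pos).ne' measure_ball_lt_top.ne
    set α₁ : ℝ := 1 / (q - 1) with hα₁def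
    have hα₁ : 0 < α₁ := by rw [hα₁def]; positivity
    set α₂ : ℝ := α₁ - 1 with hα₂def
    have hα₂ : -1 < α₂ := by rw [hα₂def]; linarith
    set J₁ : ℝ := ∫ σ in (0:ℝ)..1, (1 - σ ^ p) ^ α₁ * σ ^ ((n:ℝ) - 1) with hJ₁def
    set J₂ : ℝ := ∫ σ in (0:ℝ)..1, (1 - σ ^ p) ^ α₂ * σ ^ ((n:ℝ) - 1) with hJ₂def
    have hJ₁ : 0 < J₁ := hJ₁def ▸ aux_pos p α₁ _ hp (by linarith) hm
    have hJ₂ : 0 < J₂ := hJ₂def ▸ aux_pos p α₂ _ hp hα₂ hm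
    set K₁ : ℝ := (n:ℝ) * ω / (a * q) ^ α₁ * J₁ with hK₁def
    set K₂ : ℝ := 1 / ((q - 1) * (a * q)) * ((n:ℝ) * ω) / (a * q) ^ α₂ * J₂ with hK₂def
    have hn0 : (0:ℝ) < (n:ℝ) := by linarith
    have hK₁ : 0 < K₁ := by
      rw [hK₁def]
      have := Real.rpow_pos_of_pos haq α₁
      positivity
    have hK₂ : 0 < K₂ := by
      rw [hK₂def]
      have := Real.rpow_pos_of_pos haq α₂
      positivity
    set e₁ : ℝ := ((n:ℝ) - 1) + 1 + p * α₁ with he₁def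
    set e₂ : ℝ := ((n:ℝ) - 1) + 1 + p * α₂ with he₂def
    have he₁ : 0 < e₁ := by
      rw [he₁def]
      have : 0 < p * α₁ := mul_pos (by linarith) hα₁
      linarith
    set E : ℝ := e₁ * (r - 2) + e₂ with hEdef
    have hEneg : E < 0 := by
      have he₂eq : e₂ = e₁ - p := by rw [he₂def, he₁def, hα₂def]; ring
      rw [hEdef, he₂eq]
      nlinarith [mul_pos he₁ (show (0:ℝ) < 1 - r by linarith)]
    set K : ℝ := b * r * (r - 1) * K₁ ^ (r - 2) * K₂ with hKdef
    have hX : 0 < K₁ ^ (r - 2) := Real.rpow_pos_of_pos hK₁ _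
    have hK : K < 0 := by
      rw [hKdef]
      nlinarith [mul_pos (mul_pos (mul_pos hb hr0) hX) hK₂]
    -- the A integral
    have hA : ∀ R : ℝ, 0 < R →
        (∫ s in (0:ℝ)..R, ((R ^ p - s ^ p) / (a * q)) ^ α₁ *
            ((n:ℝ) * ω * s ^ ((n:ℝ) - 1))) = K₁ * R ^ e₁ := by
      intro R hR
      have h1 : (∫ s in (0:ℝ)..R, ((R ^ p - s ^ p) / (a * q)) ^ α₁ *
            ((n:ℝ) * ω * s ^ ((n:ℝ) - 1)))
          = ∫ s in (0:ℝ)..R, ((n:ℝ) * ω / (a * q) ^ α₁) *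
              ((R ^ p - s ^ p) ^ α₁ * s ^ ((n:ℝ) - 1)) := by
        apply intervalIntegral.integral_congr
        intro s hs
        rw [Set.uIcc_of_le hR.le] at hs
        have hsp : s ^ p ≤ R ^ p := Real.rpow_le_rpow hs.1 hs.2 (by linarith)
        have ht0 : (0:ℝ) ≤ R ^ p - s ^ p := by linarith
        beta_reduce
        rw [Real.div_rpow ht0 haq.le]
        ring
      rw [h1, intervalIntegral.integral_const_mul,
        aux_scale p α₁ ((n:ℝ) - 1) hp hm hR, ← hJ₁def, ← he₁def, hK₁def]
      ring
    have hB : ∀ R : ℝ, 0 < R →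
        (∫ s in (0:ℝ)..R, 1 / ((q - 1) * (a * q)) * ((R ^ p - s ^ p) / (a * q)) ^ α₂ *
            ((n:ℝ) * ω * s ^ ((n:ℝ) - 1))) = K₂ * R ^ e₂ := by
      intro R hR
      have h1 : (∫ s in (0:ℝ)..R, 1 / ((q - 1) * (a * q)) * ((R ^ p - s ^ p) / (a * q)) ^ α₂ *
            ((n:ℝ) * ω * s ^ ((n:ℝ) - 1)))
          = ∫ s in (0:ℝ)..R, (1 / ((q - 1) * (a * q)) * ((n:ℝ) * ω) / (a * q) ^ α₂) *
              ((R ^ p - s ^ p) ^ α₂ * s ^ ((n:ℝ) - 1)) := by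
        apply intervalIntegral.integral_congr
        intro s hs
        rw [Set.uIcc_of_le hR.le] at hs
        have hsp : s ^ p ≤ R ^ p := Real.rpow_le_rpow hs.1 hs.2 (by linarith)
        have ht0 : (0:ℝ) ≤ R ^ p - s ^ p := by linarith
        beta_reduce
        rw [Real.div_rpow ht0 haq.le]
        ring
      rw [h1, intervalIntegral.integral_const_mul,
        aux_scale p α₂ ((n:ℝ) - 1) hp hm hR, ← hJ₂def, ← he₂def, hK₂def]
      ring
    have hRE : Tendsto (fun R : ℝ => R ^ E) (𝓝[>] (0:ℝ)) atTop := by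
      have h1 : Tendsto (fun R : ℝ => R⁻¹ ^ (-E)) (𝓝[>] (0:ℝ)) atTop :=
        (tendsto_rpow_atTop (by linarith)).comp tendsto_inv_nhdsGT_zero
      apply h1.congr'
      filter_upwards [self_mem_nhdsWithin] with R hR
      have hR' : 0 < R := hR
      beta_reduce
      rw [Real.rpow_neg (inv_nonneg.mpr hR'.le), Real.inv_rpow hR'.le, inv_inv]
    have hT0 : Tendsto (fun R : ℝ => K * R ^ E) (𝓝[>] (0:ℝ)) atBot :=
      (tendsto_const_mul_atBot_of_neg hK).mpr hRE
    refine hT0.congr' ?_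
    filter_upwards [self_mem_nhdsWithin] with R hR
    have hR' : (0:ℝ) < R := hR
    show K * R ^ E = _
    rw [hA R hR', hB R hR',
      Real.mul_rpow hK₁.le (Real.rpow_nonneg hR'.le e₁),
      ← Real.rpow_mul hR'.le, hEdef, Real.rpow_add hR', hKdef]
    ring
  exact ⟨H, -2, by norm_num, by simpa using H.eventually (eventually_le_atBot (-2))⟩
end
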